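/- arXiv:1904.09377 — 7 statements merged into one kernel-verified Lean document; each statement's English description precedes it below -/
import Mathlib

section
/- Let G be a finite simple graph with adjacency matrix A (with natural-number entries), let i, j be vertices and let l ≤ t be natural numbers. The number of walks-with-self-loops of length t from j to i that contain exactly l self-loop steps equals C(t,l) · (A^{t−l})_{j,i}, where C(t,l) is the binomial coefficient. -/
/-- A walk-with-self-loops of length `t` from `j` to `i` in the simple graph `G`:
a map `p : Fin (t+1) → V` with `p 0 = j`, `p t = i`, and every step is either a
self-loop (`p (k+1) = p k`) or an edge of `G`. -/
def IsWalkWithLoops {V : Type*} (G : SimpleGraph V) (t : ℕ) (j i : V)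
    (p : Fin (t + 1) → V) : Prop :=
  p 0 = j ∧ p (Fin.last t) = i ∧
    ∀ k : Fin t, p k.succ = p k.castSucc ∨ G.Adj (p k.castSucc) (p k.succ)

open Finset

set_option linter.unusedSectionVars false
set_option linter.unusedVariables false

section Aux

variable {V : Type*} [Fintype V] [DecidableEq V] (G : SimpleGraph V) [DecidableRel G.Adj]

instance IsWalkWithLoops.decidable (t : ℕ) (j i : V) (p : Fin (t + 1) → V) :
    Decidable (IsWalkWithLoops G t j i p) :=
  inferInstanceAs (Decidable (p 0 = j ∧ p (Fin.last t) = i ∧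
    ∀ k : Fin t, p k.succ = p k.castSucc ∨ G.Adj (p k.castSucc) (p k.succ)))

/-- number of self-loop steps of a walk -/
def loopCount {V : Type*} [DecidableEq V] {t : ℕ} (p : Fin (t + 1) → V) : ℕ :=
  (univ.filter fun k : Fin t => p k.succ = p k.castSucc).card

lemma walk_succ_iff (t : ℕ) (j i : V) (p : Fin (t + 2) → V) :
    IsWalkWithLoops G (t + 1) j i p ↔
      IsWalkWithLoops G t j (p (Fin.last t).castSucc) (Fin.init p) ∧
      p (Fin.last (t + 1)) = i ∧
      (p (Fin.last (t + 1)) = p (Fin.last t).castSucc ∨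
        G.Adj (p (Fin.last t).castSucc) (p (Fin.last (t + 1)))) := by
  unfold IsWalkWithLoops
  rw [Fin.forall_iff_castSucc]
  simp only [Fin.init, Fin.succ_castSucc, Fin.succ_last, Fin.castSucc_zero]
  tauto

lemma loopCount_succ (t : ℕ) (p : Fin (t + 2) → V) :
    loopCount p = loopCount (Fin.init p) +
      (if p (Fin.last (t + 1)) = p (Fin.last t).castSucc then 1 else 0) := by
  unfold loopCount
  rw [Finset.card_filter, Finset.card_filter, Fin.sum_univ_castSucc]
  simp only [Fin.init, Fin.succ_castSucc, Fin.succ_last]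
  rfl

lemma fiber_card (t l : ℕ) (j i w : V) :
    ((univ.filter fun p : Fin (t + 2) → V =>
        IsWalkWithLoops G (t + 1) j i p ∧ loopCount p = l).filter
      fun p => p (Fin.last t).castSucc = w).card
    = (univ.filter fun q : Fin (t + 1) → V =>
        IsWalkWithLoops G t j w q ∧ (i = w ∨ G.Adj w i) ∧
          loopCount q + (if i = w then 1 else 0) = l).card := by
  refine Finset.card_bij' (fun p _ => Fin.init p) (fun q _ => Fin.snoc q i)
    ?_ ?_ ?_ ?_
  · intro p hp
    simp only [mem_filter, mem_univ, true_and] at hp ⊢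
    obtain ⟨⟨hw, hc⟩, hlast⟩ := hp
    rw [walk_succ_iff] at hw
    obtain ⟨hw1, hw2, hw3⟩ := hw
    rw [loopCount_succ] at hc
    rw [hlast] at hw1 hw3 hc
    rw [hw2] at hw3 hc
    exact ⟨hw1, hw3, hc⟩
  · intro q hq
    simp only [mem_filter, mem_univ, true_and] at hq ⊢
    obtain ⟨hq1, hq2, hq3⟩ := hq
    have hend : q (Fin.last t) = w := hq1.2.1
    have hcs : (Fin.snoc q i : Fin (t + 2) → V) (Fin.last t).castSucc = w := by
      rw [Fin.snoc_castSucc, hend]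
    refine ⟨⟨?_, ?_⟩, hcs⟩
    · rw [walk_succ_iff, Fin.init_snoc, Fin.snoc_last, hcs]
      exact ⟨hq1, rfl, hq2⟩
    · rw [loopCount_succ, Fin.init_snoc, Fin.snoc_last, hcs]
      exact hq3
  · intro p hp
    simp only [mem_filter, mem_univ, true_and] at hp
    have hi' : p (Fin.last (t + 1)) = i := hp.1.1.2.1
    rw [← hi']
    exact Fin.snoc_init_self p
  · intro q _
    exact Fin.init_snoc (n := t + 1) (α := fun _ => V) (x := i) (p := q)

lemma walkCount_eq (j : V) : ∀ (t l : ℕ) (i : V),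
    (univ.filter fun p : Fin (t + 1) → V =>
        IsWalkWithLoops G t j i p ∧ loopCount p = l).card
      = t.choose l * ((G.adjMatrix ℕ) ^ (t - l)) j i := by
  intro t
  induction t with
  | zero =>
    intro l i
    have hsimp : ∀ p : Fin 1 → V,
        (IsWalkWithLoops G 0 j i p ∧ loopCount p = l) ↔ (p 0 = j ∧ p 0 = i ∧ 0 = l) := by
      intro p
      unfold IsWalkWithLoops loopCount
      constructor
      · rintro ⟨⟨h1, h2, -⟩, h3⟩
        exact ⟨h1, h2, by simpa using h3⟩
      · rintro ⟨h1, h2, h3⟩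
        exact ⟨⟨h1, h2, fun k => k.elim0⟩, by simp [← h3]⟩
    rw [Finset.filter_congr (fun p _ => hsimp p)]
    rcases l with _ | m
    · simp only [Nat.choose_zero_right, Nat.zero_sub, pow_zero, Matrix.one_apply, one_mul]
      by_cases hji : j = i
      · subst hji
        rw [if_pos rfl, Finset.card_eq_one]
        refine ⟨fun _ => j, ?_⟩
        ext p
        simp [funext_iff, Fin.forall_fin_one]
      · rw [if_neg hji, Finset.card_eq_zero, Finset.filter_eq_empty_iff]
        rintro p - ⟨h1, h2, -⟩
        exact hji (h1 ▸ h2)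
    · rw [Finset.card_eq_zero.mpr, Nat.choose_eq_zero_of_lt (Nat.succ_pos m), zero_mul]
      rw [Finset.filter_eq_empty_iff]
      rintro p - ⟨-, -, h⟩
      exact Nat.succ_ne_zero m h.symm
  | succ t ih =>
    intro l i
    rw [Finset.card_eq_sum_card_fiberwise
      (f := fun p : Fin (t + 2) → V => p (Fin.last t).castSucc)
      (t := (univ : Finset V)) (fun _ _ => mem_univ _)]
    have hfib : ∀ w : V,
        ((univ.filter fun p : Fin (t + 2) → V =>
            IsWalkWithLoops G (t + 1) j i p ∧ loopCount p = l).filter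
          fun p => p (Fin.last t).castSucc = w).card
        = (if i = w then
            (univ.filter fun q : Fin (t + 1) → V =>
              IsWalkWithLoops G t j i q ∧ loopCount q + 1 = l).card else 0)
          + (if G.Adj w i then t.choose l * ((G.adjMatrix ℕ) ^ (t - l)) j w else 0) := by
      intro w
      rw [fiber_card]
      by_cases hiw : i = w
      · rcases hiw with rfl
        rw [show (univ.filter fun q : Fin (t + 1) → V =>
              IsWalkWithLoops G t j i q ∧ (i = i ∨ G.Adj i i) ∧
                loopCount q + (if i = i then 1 else 0) = l)
            = univ.filter fun q : Fin (t + 1) → V =>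
              IsWalkWithLoops G t j i q ∧ loopCount q + 1 = l from by
          ext q; simp]
        rw [if_pos rfl, if_neg (G.irrefl), add_zero]
      · by_cases hadj : G.Adj w i
        · rw [show (univ.filter fun q : Fin (t + 1) → V =>
                IsWalkWithLoops G t j w q ∧ (i = w ∨ G.Adj w i) ∧
                  loopCount q + (if i = w then 1 else 0) = l)
              = univ.filter fun q : Fin (t + 1) → V =>
                IsWalkWithLoops G t j w q ∧ loopCount q = l from by
            ext q; simp [hiw, hadj]]
          rw [ih l w, if_neg hiw, if_pos hadj, zero_add]
        · rw [show (univ.filter fun q : Fin (t + 1) → V =>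
                IsWalkWithLoops G t j w q ∧ (i = w ∨ G.Adj w i) ∧
                  loopCount q + (if i = w then 1 else 0) = l) = (∅ : Finset _) from by
            rw [Finset.filter_eq_empty_iff]
            rintro q - ⟨-, h, -⟩
            rcases h with h | h
            · exact hiw h
            · exact hadj h]
          rw [Finset.card_empty, if_neg hiw, if_neg hadj, add_zero]
    rw [Finset.sum_congr rfl (fun w _ => hfib w), Finset.sum_add_distrib,
      Finset.sum_ite_eq, if_pos (mem_univ i)]
    have hterm : ∀ w : V,
        (if G.Adj w i then t.choose l * ((G.adjMatrix ℕ) ^ (t - l)) j w else 0)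
        = t.choose l * (((G.adjMatrix ℕ) ^ (t - l)) j w * (G.adjMatrix ℕ) w i) := by
      intro w
      by_cases hadj : G.Adj w i <;> simp [hadj]
    rw [Finset.sum_congr rfl (fun w _ => hterm w), ← Finset.mul_sum,
      ← Matrix.mul_apply, ← pow_succ]
    rcases l with _ | m
    · have h1 : (univ.filter fun q : Fin (t + 1) → V =>
          IsWalkWithLoops G t j i q ∧ loopCount q + 1 = 0).card = 0 := by
        rw [Finset.card_eq_zero, Finset.filter_eq_empty_iff]
        rintro q - ⟨-, h⟩
        exact Nat.succ_ne_zero _ h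
      rw [h1, zero_add]
      simp
    · have h1 : (univ.filter fun q : Fin (t + 1) → V =>
          IsWalkWithLoops G t j i q ∧ loopCount q + 1 = m + 1).card
          = t.choose m * ((G.adjMatrix ℕ) ^ (t - m)) j i := by
        rw [← ih m i]
        apply congrArg Finset.card
        ext q
        simp
      rw [h1, Nat.choose_succ_succ, show t + 1 - (m + 1) = t - m from by omega, add_mul]
      congr 1
      by_cases hmt : m + 1 ≤ t
      · rw [show t - (m + 1) + 1 = t - m from by omega]
      · rw [Nat.choose_eq_zero_of_lt (by omega), zero_mul, zero_mul]

end Aux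

/-- the number of walks-with-self-loops of length `t` from `j` to `i`
containing exactly `l` self-loop steps equals `C(t, l) * (A ^ (t - l)) j i`, where `A`
is the adjacency matrix of `G`. -/
theorem card_walksWithLoops {V : Type*} [Fintype V] [DecidableEq V]
    (G : SimpleGraph V) [DecidableRel G.Adj] (i j : V) (t l : ℕ) (hl : l ≤ t) :
    Nat.card {p : Fin (t + 1) → V // IsWalkWithLoops G t j i p ∧
        Nat.card {k : Fin t // p k.succ = p k.castSucc} = l} =
      t.choose l * ((G.adjMatrix ℕ) ^ (t - l)) j i := by
  have hinner : ∀ p : Fin (t + 1) → V,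
      Nat.card {k : Fin t // p k.succ = p k.castSucc} = loopCount p := by
    intro p
    rw [Nat.card_eq_fintype_card, Fintype.card_subtype]
    rfl
  simp only [hinner]
  rw [Nat.card_eq_fintype_card, Fintype.card_subtype]
  exact walkCount_eq G j t l i
end

section
/- For every real ρ ≥ 1 and every β ∈ [0,1], β·(H(β) + β·log ρ) ≤ log(ρ + 1). Consequently, √(2·log ρ) ≤ sup_{β ∈ (0,1]} √(2β·(H(β) + β·log ρ)) ≤ √(2·log(ρ + 1)). -/
/-- The binary entropy function `H(β) = −β log β − (1−β) log(1−β)`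
(`Real.log 0 = 0` gives the convention `0 · log 0 = 0`). -/
noncomputable def binH (β : ℝ) : ℝ :=
  -(β * Real.log β) - (1 - β) * Real.log (1 - β)

lemma key_bound (ρ : ℝ) (hρ : 1 ≤ ρ) (β : ℝ) (hβ0 : 0 ≤ β) (hβ1 : β ≤ 1) :
    binH β + β * Real.log ρ ≤ Real.log (ρ + 1) := by
  have hρ0 : (0:ℝ) < ρ := lt_of_lt_of_le one_pos hρ
  have hρ1 : (0:ℝ) < ρ + 1 := by linarith
  rcases eq_or_lt_of_le hβ0 with h0 | h0
  · simp [binH, ← h0]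
    exact Real.log_nonneg (by linarith)
  rcases eq_or_lt_of_le hβ1 with h1 | h1
  · simp [binH, h1]
    exact Real.log_le_log hρ0 (by linarith)
  have h1β : (0:ℝ) < 1 - β := by linarith
  set a := ρ / (β * (ρ + 1)) with ha
  set b := 1 / ((1 - β) * (ρ + 1)) with hb
  have hap : 0 < a := by positivity
  have hbp : 0 < b := by positivity
  have hla : Real.log a = Real.log ρ - Real.log β - Real.log (ρ + 1) := by
    rw [ha, Real.log_div (ne_of_gt hρ0) (by positivity), Real.log_mul (ne_of_gt h0) (ne_of_gt hρ1)]
    ring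
  have hlb : Real.log b = -Real.log (1 - β) - Real.log (ρ + 1) := by
    rw [hb, Real.log_div one_ne_zero (by positivity), Real.log_mul (ne_of_gt h1β) (ne_of_gt hρ1)]
    simp
    ring
  have hga : Real.log a ≤ a - 1 := Real.log_le_sub_one_of_pos hap
  have hgb : Real.log b ≤ b - 1 := Real.log_le_sub_one_of_pos hbp
  have h1 : β * Real.log a ≤ β * (a - 1) := mul_le_mul_of_nonneg_left hga hβ0
  have h2 : (1 - β) * Real.log b ≤ (1 - β) * (b - 1) :=
    mul_le_mul_of_nonneg_left hgb (le_of_lt h1β)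
  have hba : β * a = ρ / (ρ + 1) := by rw [ha]; field_simp
  have hbb : (1 - β) * b = 1 / (ρ + 1) := by rw [hb]; field_simp
  have hsum : β * (a - 1) + (1 - β) * (b - 1) = 0 := by
    have : β * a + (1 - β) * b = 1 := by
      rw [hba, hbb]; field_simp
    nlinarith
  have := add_le_add h1 h2
  rw [hla, hlb] at this
  have hfinal : binH β + β * Real.log ρ - Real.log (ρ + 1) ≤ 0 := by
    unfold binH; nlinarith
  linarith

lemma nonneg_inner (ρ : ℝ) (hρ : 1 ≤ ρ) (β : ℝ) (hβ0 : 0 ≤ β) (hβ1 : β ≤ 1) :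
    0 ≤ binH β + β * Real.log ρ := by
  have h1 : Real.log β ≤ 0 := Real.log_nonpos hβ0 hβ1
  have h2 : Real.log (1 - β) ≤ 0 := Real.log_nonpos (by linarith) (by linarith)
  have h3 : 0 ≤ Real.log ρ := Real.log_nonneg hρ
  have := mul_nonneg hβ0 (neg_nonneg.mpr h1)
  have := mul_nonneg (by linarith : (0:ℝ) ≤ 1 - β) (neg_nonneg.mpr h2)
  unfold binH
  nlinarith

/-- for `ρ ≥ 1` and `β ∈ [0,1]`, `β (H(β) + β log ρ) ≤ log(ρ + 1)`;
consequently `√(2 log ρ) ≤ sup_{β ∈ (0,1]} √(2β (H(β) + β log ρ)) ≤ √(2 log(ρ + 1))`. -/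
theorem sup_sqrt_bounds (ρ : ℝ) (hρ : 1 ≤ ρ) :
    (∀ β ∈ Set.Icc (0 : ℝ) 1,
      β * (binH β + β * Real.log ρ) ≤ Real.log (ρ + 1)) ∧
    Real.sqrt (2 * Real.log ρ) ≤
      (⨆ β : Set.Ioc (0 : ℝ) 1,
        Real.sqrt (2 * β * (binH β + (β : ℝ) * Real.log ρ))) ∧
    (⨆ β : Set.Ioc (0 : ℝ) 1,
        Real.sqrt (2 * β * (binH β + (β : ℝ) * Real.log ρ))) ≤
      Real.sqrt (2 * Real.log (ρ + 1)) := by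
  have hpart1 : ∀ β ∈ Set.Icc (0 : ℝ) 1,
      β * (binH β + β * Real.log ρ) ≤ Real.log (ρ + 1) := by
    intro β hβ
    obtain ⟨hβ0, hβ1⟩ := hβ
    calc β * (binH β + β * Real.log ρ) ≤ 1 * (binH β + β * Real.log ρ) :=
          mul_le_mul_of_nonneg_right hβ1 (nonneg_inner ρ hρ β hβ0 hβ1)
      _ = binH β + β * Real.log ρ := one_mul _
      _ ≤ Real.log (ρ + 1) := key_bound ρ hρ β hβ0 hβ1
  have hub : ∀ β : Set.Ioc (0 : ℝ) 1,
      Real.sqrt (2 * β * (binH β + (β : ℝ) * Real.log ρ)) ≤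
        Real.sqrt (2 * Real.log (ρ + 1)) := by
    intro ⟨β, hβ0, hβ1⟩
    apply Real.sqrt_le_sqrt
    have := hpart1 β ⟨le_of_lt hβ0, hβ1⟩
    nlinarith
  have hne : Nonempty (Set.Ioc (0 : ℝ) 1) := ⟨⟨1, by norm_num⟩⟩
  have hbdd : BddAbove (Set.range fun β : Set.Ioc (0 : ℝ) 1 =>
      Real.sqrt (2 * β * (binH β + (β : ℝ) * Real.log ρ))) := by
    refine ⟨Real.sqrt (2 * Real.log (ρ + 1)), ?_⟩
    rintro x ⟨β, rfl⟩
    exact hub β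
  refine ⟨hpart1, ?_, ciSup_le hub⟩
  have h1 : Real.sqrt (2 * Real.log ρ) =
      Real.sqrt (2 * ((⟨1, by norm_num⟩ : Set.Ioc (0:ℝ) 1) : ℝ) *
        (binH ((⟨1, by norm_num⟩ : Set.Ioc (0:ℝ) 1) : ℝ) +
          ((⟨1, by norm_num⟩ : Set.Ioc (0:ℝ) 1) : ℝ) * Real.log ρ)) := by
    simp [binH]
  rw [h1]
  exact le_ciSup hbdd (⟨1, by norm_num⟩ : Set.Ioc (0:ℝ) 1)
end

section
/- Let G be a finite simple graph on vertex set V with spectral radius ρ, let μ be a probability measure on ℝ with mean 0 whose moment generating function is finite for every γ ≥ 0, with large deviation rate function I. Fix t ≥ 1 and vertices i, j, and equip Ω_t = ({0,…,t−1} × V × V → ℝ) with the finite product probability measure whose coordinates are i.i.d. with law μ. Define the noisy-self-loop maximum M̃_t^{(i,j)}(ω) as the maximum over all walks-with-self-loops p of length t from j to i of ∑_{k<t} ω(k, p(k), p(k+1)) (every step, including self-loop steps, contributes a noise term). Then for every x > 0, the probability of { ω : M̃_t^{(i,j)}(ω) > t·x } is at most ((ρ + 1)·e^{−I(x)})^t.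 -/
open MeasureTheory
open scoped ENNReal

/-- The spectral radius of a finite simple graph: the `ℓ² → ℓ²` operator norm of its
adjacency matrix. -/
noncomputable def specRad {V : Type*} [Fintype V] [DecidableEq V] (G : SimpleGraph V)
    [DecidableRel G.Adj] : ℝ :=
  ‖LinearMap.toContinuousLinearMap (Matrix.toEuclideanLin (G.adjMatrix ℝ))‖

/-- The large deviation rate function `I(y) = sup_{γ > 0} (y·γ − log M(γ))` of `μ`. -/
noncomputable def ldRate (μ : Measure ℝ) (y : ℝ) : ℝ :=
  ⨆ γ : {g : ℝ // 0 < g}, (y * γ - Real.log (∫ v, Real.exp ((γ : ℝ) * v) ∂μ))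

/-- The noisy-self-loop maximum `M̃_t^{(i,j)}(ω)`: the maximum over all
walks-with-self-loops `p` of length `t` from `j` to `i` of `∑_{k<t} ω (k, p k, p (k+1))`;
every step, including self-loop steps, contributes a noise term. -/
noncomputable def pathMaxNoisy {V : Type*} [Fintype V] (G : SimpleGraph V) (t : ℕ)
    (j i : V) (ω : Fin t × V × V → ℝ) : ℝ :=
  ⨆ p : {p : Fin (t + 1) → V // IsWalkWithLoops G t j i p},
    ∑ k : Fin t, ω (k, p.1 k.castSucc, p.1 k.succ)

section Counting

variable {V : Type*} [Fintype V] [DecidableEq V] (G : SimpleGraph V) [DecidableRel G.Adj]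

/-- Decomposing a walk-with-self-loops of length `t+1` into its first step and the
remaining walk of length `t`. -/
def walkSuccEquiv (t : ℕ) (j i : V) :
    {p : Fin (t + 1 + 1) → V // IsWalkWithLoops G (t + 1) j i p} ≃
      {q : Fin (t + 1) → V // (q 0 = j ∨ G.Adj j (q 0)) ∧ IsWalkWithLoops G t (q 0) i q} where
  toFun p := ⟨fun k => p.1 k.succ, by
    obtain ⟨h0, hl, hs⟩ := p.2
    refine ⟨?_, rfl, ?_, ?_⟩
    · have := hs 0
      rw [Fin.castSucc_zero, h0] at this
      exact this
    · show p.1 (Fin.last t).succ = i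
      rw [Fin.succ_last]; exact hl
    · intro k
      have := hs k.succ
      rw [← Fin.succ_castSucc] at this
      exact this⟩
  invFun q := ⟨Fin.cases j q.1, by
    obtain ⟨h1, -, hl, hs⟩ := q.2
    refine ⟨by simp, ?_, ?_⟩
    · show Fin.cases j q.1 (Fin.last (t + 1)) = i
      rw [← Fin.succ_last, Fin.cases_succ]
      exact hl
    · intro k
      induction k using Fin.cases with
      | zero =>
        simp only [Fin.cases_succ, Fin.castSucc_zero, Fin.cases_zero]
        exact h1
      | succ k' =>
        have := hs k'
        simp only [← Fin.succ_castSucc, Fin.cases_succ]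
        exact this⟩
  left_inv p := by
    apply Subtype.ext
    funext k
    induction k using Fin.cases with
    | zero => simpa using p.2.1.symm
    | succ k' => simp
  right_inv q := by
    apply Subtype.ext
    funext k
    simp

/-- The number of walks-with-self-loops of length `t` from `j` to `i` is the `(j,i)` entry
of `(A + 1) ^ t`. -/
theorem walk_card_eq (t : ℕ) (i : V) : ∀ j : V,
    (Nat.card {p : Fin (t + 1) → V // IsWalkWithLoops G t j i p} : ℝ) =
      ((G.adjMatrix ℝ + 1) ^ t) j i := by
  classical
  induction t with
  | zero =>
    intro j
    by_cases h : j = i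
    · subst h
      have : Unique {p : Fin 1 → V // IsWalkWithLoops G 0 j j p} := by
        refine ⟨⟨⟨fun _ => j, rfl, rfl, fun k => k.elim0⟩⟩, ?_⟩
        rintro ⟨p, h0, -, -⟩
        apply Subtype.ext
        funext k
        have hk : k = 0 := Subsingleton.elim _ _
        subst hk
        exact h0
      rw [Nat.card_unique]
      simp [Matrix.one_apply]
    · have : IsEmpty {p : Fin 1 → V // IsWalkWithLoops G 0 j i p} := by
        refine ⟨fun p => h ?_⟩
        obtain ⟨h0, hl, -⟩ := p.2
        rw [← h0]; exact hl
      rw [Nat.card_of_isEmpty]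
      simp [Matrix.one_apply, h]
  | succ t ih =>
    intro j
    rw [Nat.card_congr (walkSuccEquiv G t j i), Nat.card_eq_fintype_card,
      Fintype.card_subtype,
      Finset.card_eq_sum_card_fiberwise (f := fun q => q 0) (t := Finset.univ)
        (fun q _ => Finset.mem_univ _)]
    rw [pow_succ']
    push_cast
    rw [Matrix.mul_apply]
    refine Finset.sum_congr rfl fun m _ => ?_
    rw [Finset.filter_filter]
    by_cases hm : j = m ∨ G.Adj j m
    · have hiff : ∀ q : Fin (t + 1) → V,
          (((q 0 = j ∨ G.Adj j (q 0)) ∧ IsWalkWithLoops G t (q 0) i q) ∧ q 0 = m) ↔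
            IsWalkWithLoops G t m i q := by
        intro q
        constructor
        · rintro ⟨⟨-, hw⟩, h0⟩
          exact ⟨h0, hw.2.1, hw.2.2⟩
        · intro hw
          refine ⟨⟨?_, rfl, hw.2.1, hw.2.2⟩, hw.1⟩
          rcases hm with h | h
          · exact Or.inl (hw.1.trans h.symm)
          · exact Or.inr (hw.1 ▸ h)
      rw [Finset.filter_congr fun q _ => hiff q]
      have hB : (G.adjMatrix ℝ + 1) j m = 1 := by
        rcases hm with h | h
        · subst h
          simp [Matrix.one_apply]
        · have hne : j ≠ m := G.ne_of_adj h
          simp [Matrix.one_apply, h, hne]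
      rw [hB, one_mul, ← ih m, ← Fintype.card_subtype, ← Nat.card_eq_fintype_card]
    · have hempty : Finset.filter
          (fun q : Fin (t + 1) → V =>
            ((q 0 = j ∨ G.Adj j (q 0)) ∧ IsWalkWithLoops G t (q 0) i q) ∧ q 0 = m)
          Finset.univ = ∅ := by
        refine Finset.filter_false_of_mem ?_
        rintro q - ⟨⟨hor, -⟩, h0⟩
        rw [h0] at hor
        exact hm (hor.imp Eq.symm id)
      push_neg at hm
      rw [hempty]
      simp [Matrix.one_apply, hm.1, hm.2]

end Counting

section NormBound

open Matrix
open scoped Matrix.Norms.L2Operator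

lemma euclidean_coord_le_norm {V : Type*} [Fintype V] (y : EuclideanSpace ℝ V) (a : V) :
    |y a| ≤ ‖y‖ := by
  rw [EuclideanSpace.norm_eq]
  have h1 : |y a| = Real.sqrt (‖y a‖ ^ 2) := by
    rw [Real.sqrt_sq_eq_abs]; simp [abs_abs]
  rw [h1]
  apply Real.sqrt_le_sqrt
  exact Finset.single_le_sum (f := fun i => ‖y i‖ ^ 2) (fun i _ => sq_nonneg _)
    (Finset.mem_univ a)

lemma entry_le_l2_opNorm {V : Type*} [Fintype V] [DecidableEq V] (M : Matrix V V ℝ) (a b : V) :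
    M a b ≤ ‖M‖ := by
  have h := M.l2_opNorm_mulVec (EuclideanSpace.single b 1)
  rw [EuclideanSpace.norm_single, norm_one, mul_one] at h
  set y : EuclideanSpace ℝ V := (EuclideanSpace.equiv V ℝ).symm (M *ᵥ (EuclideanSpace.single b 1))
    with hy
  have hya : y a = M a b := by
    show (M *ᵥ ((EuclideanSpace.single b 1 : EuclideanSpace ℝ V) : V → ℝ)) a = M a b
    have : ((EuclideanSpace.single b 1 : EuclideanSpace ℝ V) : V → ℝ) = Pi.single b 1 := by
      funext k
      simp [EuclideanSpace.single_apply, Pi.single_apply]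
    rw [this, Matrix.mulVec_single]
    exact mul_one _
  calc M a b ≤ |y a| := by rw [hya]; exact le_abs_self _
    _ ≤ ‖y‖ := euclidean_coord_le_norm y a
    _ ≤ ‖M‖ := h

lemma norm_B_le {V : Type*} [Fintype V] [DecidableEq V] (G : SimpleGraph V)
    [DecidableRel G.Adj] : ‖G.adjMatrix ℝ + 1‖ ≤ specRad G + 1 := by
  refine (norm_add_le _ _).trans ?_
  gcongr
  · exact le_of_eq rfl
  · rw [Matrix.cstar_norm_def, _root_.map_one]
    exact ContinuousLinearMap.norm_id_le

lemma entry_pow_le {V : Type*} [Fintype V] [DecidableEq V] (G : SimpleGraph V)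
    [DecidableRel G.Adj] (t : ℕ) (ht : 1 ≤ t) (a b : V) :
    ((G.adjMatrix ℝ + 1) ^ t) a b ≤ (specRad G + 1) ^ t := by
  calc ((G.adjMatrix ℝ + 1) ^ t) a b ≤ ‖(G.adjMatrix ℝ + 1) ^ t‖ := entry_le_l2_opNorm _ a b
    _ ≤ ‖G.adjMatrix ℝ + 1‖ ^ t := norm_pow_le' _ ht
    _ ≤ (specRad G + 1) ^ t := pow_le_pow_left₀ (norm_nonneg _) (norm_B_le G) t

end NormBound

/-- Chernoff bound for a sum of `t` i.i.d. coordinates of a product measure. -/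
lemma chernoff_aux {ι : Type*} [Fintype ι] (μ : Measure ℝ) [IsProbabilityMeasure μ]
    {t : ℕ} (c : Fin t → ι) (hc : Function.Injective c) {γ : ℝ} (hγ : 0 < γ)
    (hint : Integrable (fun v => Real.exp (γ * v)) μ) (a : ℝ) :
    Measure.pi (fun _ : ι => μ) {ω : ι → ℝ | a < ∑ k, ω (c k)} ≤
      ENNReal.ofReal (Real.exp (-(γ * a)) * (∫ v, Real.exp (γ * v) ∂μ) ^ t) := by
  classical
  letI : MeasureSpace ℝ := ⟨μ⟩
  haveI : SigmaFinite (volume : Measure ℝ) := inferInstanceAs (SigmaFinite μ)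
  set M : ℝ := ∫ v, Real.exp (γ * v) ∂μ with hM
  set T : Finset ι := Finset.image c Finset.univ with hT
  set g : ι → ℝ → ℝ := fun d v => if d ∈ T then Real.exp (γ * v) else 1 with hg
  have key : ∀ ω : ι → ℝ, Real.exp (γ * ∑ k, ω (c k)) = ∏ d, g d (ω d) := by
    intro ω
    rw [Finset.mul_sum, Real.exp_sum]
    simp only [hg]
    rw [Finset.prod_ite_mem, Finset.univ_inter, hT,
      Finset.prod_image (fun x _ y _ h => hc h)]
  have hgint : ∀ d, Integrable (g d) μ := by
    intro d
    by_cases hd : d ∈ T <;> simp only [hg, hd, if_true, if_false]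
    · exact hint
    · exact integrable_const 1
  have hSint : Integrable (fun ω : ι → ℝ => Real.exp (γ * ∑ k, ω (c k)))
      (Measure.pi fun _ : ι => μ) := by
    have := Integrable.fintype_prod (𝕜 := ℝ) (f := g) hgint
    simpa only [← key] using this
  have hI : ∫ ω : ι → ℝ, Real.exp (γ * ∑ k, ω (c k)) ∂(Measure.pi fun _ : ι => μ)
      = M ^ t := by
    rw [show (Measure.pi fun _ : ι => μ) = (volume : Measure (ι → ℝ)) from rfl]
    calc ∫ ω : ι → ℝ, Real.exp (γ * ∑ k, ω (c k))
        = ∫ ω : ι → ℝ, ∏ d, g d (ω d) := by simp only [key]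
      _ = ∏ d, ∫ v, g d v := integral_fintype_prod_eq_prod g
      _ = ∏ d, (if d ∈ T then M else 1) := by
          refine Finset.prod_congr rfl fun d _ => ?_
          by_cases hd : d ∈ T <;> simp only [hg, hd, if_true, if_false]
          · rfl
          · simp
      _ = M ^ t := by
          rw [Finset.prod_ite_mem, Finset.univ_inter, Finset.prod_const, hT,
            Finset.card_image_of_injective _ hc, Finset.card_univ, Fintype.card_fin]
  have hmeas : AEMeasurable (fun ω : ι → ℝ => ENNReal.ofReal (Real.exp (γ * ∑ k, ω (c k))))
      (Measure.pi fun _ : ι => μ) := by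
    apply Measurable.aemeasurable
    apply ENNReal.measurable_ofReal.comp
    apply Real.measurable_exp.comp
    exact (Finset.measurable_sum Finset.univ fun k _ => measurable_pi_apply (c k)).const_mul γ
  have hmarkov := mul_meas_ge_le_lintegral₀ hmeas (ENNReal.ofReal (Real.exp (γ * a)))
  have hsub : {ω : ι → ℝ | a < ∑ k, ω (c k)} ⊆
      {ω : ι → ℝ | ENNReal.ofReal (Real.exp (γ * a)) ≤
        ENNReal.ofReal (Real.exp (γ * ∑ k, ω (c k)))} := by
    intro ω hω
    exact ENNReal.ofReal_le_ofReal (Real.exp_le_exp.2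
      (mul_le_mul_of_nonneg_left (le_of_lt hω) hγ.le))
  have hL : ∫⁻ ω : ι → ℝ, ENNReal.ofReal (Real.exp (γ * ∑ k, ω (c k)))
      ∂(Measure.pi fun _ : ι => μ) = ENNReal.ofReal (M ^ t) := by
    rw [← ofReal_integral_eq_lintegral_ofReal hSint
      (Filter.Eventually.of_forall fun ω => (Real.exp_pos _).le), hI]
  have h1 : ENNReal.ofReal (Real.exp (γ * a)) *
      Measure.pi (fun _ : ι => μ) {ω : ι → ℝ | a < ∑ k, ω (c k)} ≤ ENNReal.ofReal (M ^ t) := by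
    refine le_trans ?_ (hmarkov.trans hL.le)
    exact mul_le_mul_right (measure_mono hsub) _
  have hεpos : (0 : ℝ≥0∞) < ENNReal.ofReal (Real.exp (γ * a)) :=
    ENNReal.ofReal_pos.2 (Real.exp_pos _)
  rw [mul_comm] at h1
  rw [← ENNReal.le_div_iff_mul_le (Or.inl hεpos.ne') (Or.inl ENNReal.ofReal_ne_top)] at h1
  refine h1.trans (le_of_eq ?_)
  rw [← ENNReal.ofReal_div_of_pos (Real.exp_pos _)]
  congr 1
  rw [Real.exp_neg, div_eq_mul_inv, mul_comm]

/-- under the i.i.d. product noise measure, for every `x > 0`,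
`P[M̃_t^{(i,j)} > t·x] ≤ ((ρ + 1) e^{−I(x)})^t`. -/
theorem pathMaxNoisy_tail_bound {V : Type*} [Fintype V] [DecidableEq V]
    (G : SimpleGraph V) [DecidableRel G.Adj]
    (μ : Measure ℝ) [IsProbabilityMeasure μ] (hmean : ∫ v, v ∂μ = 0)
    (hmgf : ∀ γ : ℝ, 0 ≤ γ → Integrable (fun v => Real.exp (γ * v)) μ)
    (t : ℕ) (ht : 1 ≤ t) (i j : V) (x : ℝ) (hx : 0 < x) :
    Measure.pi (fun _ : Fin t × V × V => μ) {ω | (t : ℝ) * x < pathMaxNoisy G t j i ω} ≤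
      ENNReal.ofReal (((specRad G + 1) * Real.exp (-(ldRate μ x))) ^ t) := by
  classical
  set π : Measure ((Fin t × V × V) → ℝ) := Measure.pi (fun _ => μ) with hπ
  letI : Fintype {p : Fin (t + 1) → V // IsWalkWithLoops G t j i p} := Fintype.ofFinite _
  set E : {p : Fin (t + 1) → V // IsWalkWithLoops G t j i p} → Set ((Fin t × V × V) → ℝ) :=
    fun p => {ω | (t : ℝ) * x < ∑ k : Fin t, ω (k, p.1 k.castSucc, p.1 k.succ)} with hE
  have htpos : (0 : ℝ) < (t : ℝ) * x := by
    have h1 : (1 : ℝ) ≤ (t : ℝ) := by exact_mod_cast ht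
    nlinarith
  have hsub : {ω : (Fin t × V × V) → ℝ | (t : ℝ) * x < pathMaxNoisy G t j i ω} ⊆
      ⋃ p, E p := by
    intro ω hω
    simp only [Set.mem_setOf_eq, pathMaxNoisy] at hω
    by_contra hn
    simp only [Set.mem_iUnion, not_exists, hE, Set.mem_setOf_eq, not_lt] at hn
    rcases isEmpty_or_nonempty {p : Fin (t + 1) → V // IsWalkWithLoops G t j i p} with h | h
    · rw [Real.iSup_of_isEmpty] at hω
      linarith
    · exact absurd hω (not_lt.2 (ciSup_le hn))
  have hρ1 : (0 : ℝ) ≤ specRad G + 1 :=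
    add_nonneg (norm_nonneg _) zero_le_one
  have hcard : (Nat.card {p : Fin (t + 1) → V // IsWalkWithLoops G t j i p} : ℝ) ≤
      (specRad G + 1) ^ t := by
    rw [walk_card_eq]
    exact entry_pow_le G t ht j i
  have key : ∀ b : ℝ, 0 ≤ b →
      (∀ p : {p : Fin (t + 1) → V // IsWalkWithLoops G t j i p}, π (E p) ≤ ENNReal.ofReal b) →
      π {ω | (t : ℝ) * x < pathMaxNoisy G t j i ω} ≤
        ENNReal.ofReal ((specRad G + 1) ^ t * b) := by
    intro b hb hEb
    calc π {ω | (t : ℝ) * x < pathMaxNoisy G t j i ω}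
        ≤ π (⋃ p, E p) := measure_mono hsub
      _ ≤ ∑' p, π (E p) := measure_iUnion_le E
      _ = ∑ p, π (E p) := tsum_fintype _
      _ ≤ ∑ _p : {p : Fin (t + 1) → V // IsWalkWithLoops G t j i p}, ENNReal.ofReal b :=
          Finset.sum_le_sum fun p _ => hEb p
      _ = (Fintype.card {p : Fin (t + 1) → V // IsWalkWithLoops G t j i p} : ℝ≥0∞) *
          ENNReal.ofReal b := by
          rw [Finset.sum_const, Finset.card_univ, nsmul_eq_mul]
      _ ≤ ENNReal.ofReal ((specRad G + 1) ^ t * b) := by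
          rw [← ENNReal.ofReal_natCast, ← ENNReal.ofReal_mul (Nat.cast_nonneg _)]
          apply ENNReal.ofReal_le_ofReal
          apply mul_le_mul_of_nonneg_right _ hb
          rw [← Nat.card_eq_fintype_card]
          exact hcard
  have hprob : ∀ p : {p : Fin (t + 1) → V // IsWalkWithLoops G t j i p},
      π (E p) ≤ ENNReal.ofReal 1 := by
    intro p
    rw [ENNReal.ofReal_one]
    exact prob_le_one
  have hchern : ∀ γ : ℝ, 0 < γ →
      ∀ p : {p : Fin (t + 1) → V // IsWalkWithLoops G t j i p},
      π (E p) ≤ ENNReal.ofReal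
        (Real.exp (-(γ * ((t : ℝ) * x))) * (∫ v, Real.exp (γ * v) ∂μ) ^ t) := by
    intro γ hγ p
    exact chernoff_aux μ (fun k => (k, p.1 k.castSucc, p.1 k.succ))
      (fun a b h => by simpa using congrArg Prod.fst h) hγ (hmgf γ hγ.le) _
  set I : ℝ := ldRate μ x with hIdef
  set f : {g : ℝ // 0 < g} → ℝ :=
    fun γ => x * γ.1 - Real.log (∫ v, Real.exp (γ.1 * v) ∂μ) with hf
  have hIf : I = ⨆ γ, f γ := rfl
  have hgoal : ((specRad G + 1) * Real.exp (-I)) ^ t =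
      (specRad G + 1) ^ t * Real.exp ((t : ℝ) * (0 - I)) := by
    rw [mul_pow, zero_sub, ← Real.exp_nat_mul]
  by_cases hbdd : BddAbove (Set.range f)
  · haveI : Nonempty {g : ℝ // 0 < g} := ⟨⟨1, one_pos⟩⟩
    set φ : ℝ → ℝ≥0∞ :=
      fun ε => ENNReal.ofReal ((specRad G + 1) ^ t * Real.exp ((t : ℝ) * (ε - I))) with hφ
    have hφcont : Continuous φ := by
      apply ENNReal.continuous_ofReal.comp
      fun_prop
    have hbound : ∀ ε ∈ Set.Ioi (0 : ℝ),
        π {ω | (t : ℝ) * x < pathMaxNoisy G t j i ω} ≤ φ ε := by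
      intro ε hε
      rw [Set.mem_Ioi] at hε
      obtain ⟨γ, hγf⟩ : ∃ γ : {g : ℝ // 0 < g}, I - ε < f γ := by
        apply exists_lt_of_lt_ciSup
        rw [← hIf]
        linarith
      have hMpos : 0 < ∫ v, Real.exp (γ.1 * v) ∂μ := integral_exp_pos (hmgf γ.1 γ.2.le)
      have h2 : Real.exp (-(γ.1 * ((t : ℝ) * x))) * (∫ v, Real.exp (γ.1 * v) ∂μ) ^ t ≤
          Real.exp ((t : ℝ) * (ε - I)) := by
        rw [show (∫ v, Real.exp (γ.1 * v) ∂μ) = Real.exp (Real.log (∫ v, Real.exp (γ.1 * v) ∂μ))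
            from (Real.exp_log hMpos).symm, ← Real.exp_nat_mul, ← Real.exp_add]
        apply Real.exp_le_exp.2
        have h3 : I - ε < x * γ.1 - Real.log (∫ v, Real.exp (γ.1 * v) ∂μ) := hγf
        have ht' : (0 : ℝ) ≤ (t : ℝ) := Nat.cast_nonneg t
        nlinarith
      have hkey := key _ (by positivity) (hchern γ.1 γ.2)
      refine hkey.trans ?_
      rw [hφ]
      exact ENNReal.ofReal_le_ofReal
        (mul_le_mul_of_nonneg_left h2 (pow_nonneg hρ1 t))
    have hlim : Filter.Tendsto φ (nhdsWithin 0 (Set.Ioi 0)) (nhds (φ 0)) :=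
      (hφcont.tendsto 0).mono_left nhdsWithin_le_nhds
    have hfin := ge_of_tendsto hlim (Filter.eventually_of_mem self_mem_nhdsWithin hbound)
    have hφ0 : φ 0 = ENNReal.ofReal (((specRad G + 1) * Real.exp (-I)) ^ t) := by
      rw [hφ, hgoal]
    rwa [hφ0] at hfin
  · have hI0 : I = 0 := Real.iSup_of_not_bddAbove hbdd
    have hfin := key 1 zero_le_one hprob
    refine hfin.trans (le_of_eq ?_)
    rw [hI0] at hgoal ⊢
    rw [hgoal]
    simp
end

section
/- Let G be a d-regular finite simple graph on vertex set V with d ≥ 1, and let μ be a probability measure on ℝ with finite first moment. Fix a vertex i. Then for almost every ω in the i.i.d. noise field, liminf_{t→∞} (1/t)·max_{j ∈ V} M_t^{(i,j)}(ω) ≥ m₊(d). -/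
open MeasureTheory Filter

/-- `M_t^{(i,j)}(ω)` for a noise field `ω : ℕ × V × V → ℝ`. -/
noncomputable def pathMaxInf {V : Type*} [Fintype V] [DecidableEq V] (G : SimpleGraph V)
    (t : ℕ) (j i : V) (ω : ℕ × V × V → ℝ) : ℝ :=
  ⨆ p : {p : Fin (t + 1) → V // IsWalkWithLoops G t j i p},
    ∑ k : Fin t, if p.1 k.castSucc = p.1 k.succ then 0
      else ω ((k : ℕ), p.1 k.castSucc, p.1 k.succ)

/-- `m₊(d)`: the expectation of the positive part of the maximum of `d` i.i.d. samples
from `μ`. -/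
noncomputable def mPlus (μ : Measure ℝ) (d : ℕ) : ℝ :=
  ∫ y, max 0 (⨆ r : Fin d, y r) ∂(Measure.pi fun _ : Fin d => μ)

namespace LPPaux

variable {d : ℕ}

/-- measurable argmax of a tuple -/
noncomputable def amax (hd : 0 < d) (x : Fin d → ℝ) : Fin d :=
  (Finset.univ.filter (fun r => ∀ s, x s ≤ x r)).min' (by
    obtain ⟨r, -, hr⟩ := Finset.exists_max_image Finset.univ x ⟨⟨0, hd⟩, Finset.mem_univ _⟩
    exact ⟨r, Finset.mem_filter.mpr ⟨Finset.mem_univ _, fun s => hr s (Finset.mem_univ s)⟩⟩)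

lemma amax_spec (hd : 0 < d) (x : Fin d → ℝ) : ∀ s, x s ≤ x (amax hd x) := by
  have h : amax hd x ∈ Finset.univ.filter (fun r => ∀ s, x s ≤ x r) := Finset.min'_mem _ _
  exact (Finset.mem_filter.mp h).2

lemma amax_eq_iff (hd : 0 < d) (x : Fin d → ℝ) (r : Fin d) :
    amax hd x = r ↔ (∀ s, x s ≤ x r) ∧ ∀ r', (∀ s, x s ≤ x r') → r ≤ r' := by
  constructor
  · rintro rfl
    refine ⟨amax_spec hd x, fun r' h' => Finset.min'_le _ _ ?_⟩
    exact Finset.mem_filter.mpr ⟨Finset.mem_univ _, h'⟩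
  · rintro ⟨h1, h2⟩
    refine le_antisymm (Finset.min'_le _ _ (Finset.mem_filter.mpr ⟨Finset.mem_univ _, h1⟩)) ?_
    apply h2
    exact amax_spec hd x

lemma measurableSet_amax (hd : 0 < d) (r : Fin d) :
    MeasurableSet {x : Fin d → ℝ | amax hd x = r} := by
  classical
  have hset : {x : Fin d → ℝ | amax hd x = r} =
      (⋂ s : Fin d, {x : Fin d → ℝ | x s ≤ x r}) ∩
        ⋂ r' : Fin d, (if r ≤ r' then Set.univ else (⋂ s : Fin d, {x : Fin d → ℝ | x s ≤ x r'})ᶜ) := by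
    ext x
    simp only [Set.mem_inter_iff, Set.mem_iInter, Set.mem_setOf_eq, amax_eq_iff hd]
    constructor
    · rintro ⟨h1, h2⟩
      refine ⟨h1, fun r' => ?_⟩
      by_cases h : r ≤ r'
      · simp [h]
      · simp only [h, if_false, Set.mem_compl_iff, Set.mem_iInter, Set.mem_setOf_eq]
        intro hall
        exact h (h2 r' hall)
    · rintro ⟨h1, h2⟩
      refine ⟨h1, fun r' hall => ?_⟩
      by_cases h : r ≤ r'
      · exact h
      · have := h2 r'
        simp only [h, if_false, Set.mem_compl_iff, Set.mem_iInter, Set.mem_setOf_eq] at this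
        exact absurd hall this
  rw [hset]
  refine MeasurableSet.inter (MeasurableSet.iInter fun s => ?_) (MeasurableSet.iInter fun r' => ?_)
  · exact measurableSet_le (measurable_pi_apply s) (measurable_pi_apply r)
  · split_ifs
    · exact MeasurableSet.univ
    · exact (MeasurableSet.iInter fun s =>
        measurableSet_le (measurable_pi_apply s) (measurable_pi_apply r')).compl

lemma measurable_xamax (hd : 0 < d) : Measurable (fun x : Fin d → ℝ => x (amax hd x)) := by
  classical
  have hfun : (fun x : Fin d → ℝ => x (amax hd x)) =
      fun x => ∑ r : Fin d, if amax hd x = r then x r else 0 := by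
    funext x
    rw [Finset.sum_ite_eq Finset.univ (amax hd x) (fun r => x r)]
    simp
  rw [hfun]
  exact Finset.measurable_sum _ fun r _ =>
    Measurable.ite (measurableSet_amax hd r) (measurable_pi_apply r) measurable_const

lemma sup_eq_amax (hd : 0 < d) (x : Fin d → ℝ) : (⨆ r, x r) = x (amax hd x) := by
  haveI : Nonempty (Fin d) := ⟨⟨0, hd⟩⟩
  exact le_antisymm (ciSup_le (amax_spec hd x))
    (le_ciSup (Set.Finite.bddAbove (Set.finite_range x)) _)

lemma measurable_supfin (hd : 0 < d) : Measurable (fun x : Fin d → ℝ => ⨆ r, x r) := by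
  have : (fun x : Fin d → ℝ => ⨆ r, x r) = fun x => x (amax hd x) :=
    funext fun x => sup_eq_amax hd x
  rw [this]; exact measurable_xamax hd

/-- positive part of the max of a tuple -/
noncomputable def Ym (x : Fin d → ℝ) : ℝ := max 0 (⨆ r, x r)

lemma measurable_Ym (hd : 0 < d) : Measurable (Ym (d := d)) :=
  measurable_const.max (measurable_supfin hd)

lemma Ym_nonneg (x : Fin d → ℝ) : 0 ≤ Ym x := le_max_left _ _

lemma Ym_le_sum_abs (hd : 0 < d) (x : Fin d → ℝ) : Ym x ≤ ∑ r : Fin d, |x r| := by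
  refine max_le (Finset.sum_nonneg fun r _ => abs_nonneg _) ?_
  rw [sup_eq_amax hd x]
  exact le_trans (le_abs_self _) (Finset.single_le_sum (fun r _ => abs_nonneg (x r))
    (Finset.mem_univ _))

variable {V : Type*} [Fintype V] [DecidableEq V]

/-- enumeration of neighbors of a vertex in a `d`-regular graph -/
noncomputable def nbr (G : SimpleGraph V) [DecidableRel G.Adj] {d : ℕ}
    (hreg : ∀ v : V, G.degree v = d) (v : V) (r : Fin d) : V :=
  ((Finset.equivFinOfCardEq (s := G.neighborFinset v)
    ((SimpleGraph.card_neighborFinset_eq_degree G v).trans (hreg v))).symm r : G.neighborFinset v)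

lemma nbr_adj (G : SimpleGraph V) [DecidableRel G.Adj] {d : ℕ}
    (hreg : ∀ v : V, G.degree v = d) (v : V) (r : Fin d) : G.Adj v (nbr G hreg v r) := by
  have h := ((Finset.equivFinOfCardEq (s := G.neighborFinset v)
    ((SimpleGraph.card_neighborFinset_eq_degree G v).trans (hreg v))).symm r).2
  exact (SimpleGraph.mem_neighborFinset G v _).mp h

lemma nbr_inj (G : SimpleGraph V) [DecidableRel G.Adj] {d : ℕ}
    (hreg : ∀ v : V, G.degree v = d) (v : V) : Function.Injective (nbr G hreg v) := by
  intro a b h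
  exact (Equiv.symm _).injective (Subtype.coe_injective h)

/-- greedy selection: move to the best neighbor if its weight is positive, else stay -/
noncomputable def sel (G : SimpleGraph V) [DecidableRel G.Adj] {d : ℕ} (hd : 0 < d)
    (hreg : ∀ v : V, G.degree v = d) (v : V) (x : Fin d → ℝ) : V :=
  if 0 < ⨆ r, x r then nbr G hreg v (amax hd x) else v

lemma measurableSet_sel_eq (G : SimpleGraph V) [DecidableRel G.Adj] {d : ℕ} (hd : 0 < d)
    (hreg : ∀ v : V, G.degree v = d) (v u : V) :
    MeasurableSet {x : Fin d → ℝ | sel G hd hreg v x = u} := by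
  classical
  have hset : {x : Fin d → ℝ | sel G hd hreg v x = u} =
      ({x : Fin d → ℝ | 0 < ⨆ r, x r} ∩
        ⋃ r : Fin d, ({x : Fin d → ℝ | amax hd x = r} ∩
          (if nbr G hreg v r = u then Set.univ else ∅))) ∪
      ({x : Fin d → ℝ | 0 < ⨆ r, x r}ᶜ ∩ (if v = u then Set.univ else ∅)) := by
    ext x
    by_cases hx : 0 < ⨆ r, x r
    · simp only [sel, hx, if_true, Set.mem_union, Set.mem_inter_iff, Set.mem_setOf_eq,
        Set.mem_compl_iff, Set.mem_iUnion, not_true, false_and, or_false, true_and]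
      constructor
      · intro h
        exact ⟨amax hd x, rfl, by simp [h]⟩
      · rintro ⟨r, hr, hru⟩
        by_cases h : nbr G hreg v r = u
        · rw [hr]; exact h
        · simp [h] at hru
    · simp only [sel, hx, if_false, Set.mem_union, Set.mem_inter_iff, Set.mem_setOf_eq,
        Set.mem_compl_iff, not_false_iff, true_and, false_and, false_or]
      constructor
      · intro h; simp [h]
      · intro h
        by_cases hvu : v = u
        · exact hvu
        · simp [hvu] at h
  rw [hset]
  have h1 : MeasurableSet {x : Fin d → ℝ | 0 < ⨆ r, x r} :=
    measurableSet_lt measurable_const (measurable_supfin hd)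
  refine MeasurableSet.union (h1.inter (MeasurableSet.iUnion fun r => ?_))
    (h1.compl.inter ?_)
  · exact (measurableSet_amax hd r).inter (by split_ifs <;> simp)
  · split_ifs <;> simp

set_option linter.unusedSectionVars false

section Greedy

variable (G : SimpleGraph V) [DecidableRel G.Adj] {d : ℕ}

/-- the row of weights at time `k` out of vertex `v` -/
noncomputable def rowf (hreg : ∀ v : V, G.degree v = d) (k : ℕ) (v : V) (ω : ℕ × V × V → ℝ) : Fin d → ℝ :=
  fun r => ω (k, v, nbr G hreg v r)

/-- the greedy walk started at `i` -/
noncomputable def gw (hd : 0 < d) (hreg : ∀ v : V, G.degree v = d) (i : V) :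
    ℕ → (ℕ × V × V → ℝ) → V
  | 0, _ => i
  | (k+1), ω => sel G hd hreg (gw hd hreg i k ω) (rowf G hreg k (gw hd hreg i k ω) ω)

/-- the greedy gain at step `k` -/
noncomputable def Yg (hd : 0 < d) (hreg : ∀ v : V, G.degree v = d) (i : V) (k : ℕ)
    (ω : ℕ × V × V → ℝ) : ℝ :=
  Ym (rowf G hreg k (gw G hd hreg i k ω) ω)

end Greedy

/-- coordinates with time index `< k` -/
def SS (V : Type*) [Fintype V] (k : ℕ) : Finset (ℕ × V × V) :=
  Finset.range k ×ˢ (Finset.univ : Finset (V × V))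

lemma mem_SS {k : ℕ} {c : ℕ × V × V} : c ∈ SS V k ↔ c.1 < k := by
  cases c with
  | mk a b => simp [SS, Finset.mem_product]

/-- restriction of the noise field to coordinates with time `< k` -/
def ρ (k : ℕ) : (ℕ × V × V → ℝ) → (↥(SS V k) → ℝ) := fun ω c => ω c

lemma measurable_ρ (k : ℕ) : Measurable (ρ (V := V) k) :=
  measurable_pi_lambda _ fun c => measurable_pi_apply _

/-- restriction map between coordinate blocks -/
def resS {k l : ℕ} (h : k ≤ l) : (↥(SS V l) → ℝ) →
    (↥(SS V k) → ℝ) :=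
  fun f c => f ⟨c.1, mem_SS.mpr (lt_of_lt_of_le (mem_SS.mp c.2) h)⟩

lemma measurable_resS {k l : ℕ} (h : k ≤ l) : Measurable (resS (V := V) h) :=
  measurable_pi_lambda _ fun c => measurable_pi_apply _

lemma ρ_comp_resS {k l : ℕ} (h : k ≤ l) : ρ (V := V) k = resS h ∘ ρ l := rfl

section Det

variable (G : SimpleGraph V) [DecidableRel G.Adj] {d : ℕ}

/-- reading a row from the restricted field -/
noncomputable def rowres (hreg : ∀ v : V, G.degree v = d) (k : ℕ) (v : V) :
    (↥(SS V (k+1)) → ℝ) → Fin d → ℝ :=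
  fun f r => f ⟨(k, v, nbr G hreg v r), mem_SS.mpr (Nat.lt_succ_self k)⟩

lemma measurable_rowres (hreg : ∀ v : V, G.degree v = d) (k : ℕ) (v : V) :
    Measurable (rowres G hreg k v) :=
  measurable_pi_lambda _ fun r => measurable_pi_apply _

lemma rowf_eq_rowres (hreg : ∀ v : V, G.degree v = d) (k : ℕ) (v : V) :
    rowf G hreg k v = rowres G hreg k v ∘ ρ (k+1) := rfl

lemma detQ (hd : 0 < d) (hreg : ∀ v : V, G.degree v = d) (i : V) :
    ∀ (k : ℕ) (v : V), ∃ U : Set (↥(SS V k) → ℝ),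
      MeasurableSet U ∧ {ω | gw G hd hreg i k ω = v} = ρ k ⁻¹' U := by
  intro k
  induction k with
  | zero =>
    intro v
    by_cases h : i = v
    · exact ⟨Set.univ, MeasurableSet.univ, by simp [gw, h]⟩
    · exact ⟨∅, MeasurableSet.empty, by simp [gw, h]⟩
  | succ k ih =>
    intro u
    choose U hU hUeq using ih
    refine ⟨⋃ v : V, (resS (Nat.le_succ k) ⁻¹' U v ∩
        rowres G hreg k v ⁻¹' {x | sel G hd hreg v x = u}), ?_, ?_⟩
    · exact MeasurableSet.iUnion fun v =>
        ((hU v).preimage (measurable_resS _)).inter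
          ((measurableSet_sel_eq G hd hreg v u).preimage (measurable_rowres G hreg k v))
    · ext ω
      simp only [Set.mem_setOf_eq, Set.preimage_iUnion, Set.mem_iUnion, Set.mem_inter_iff,
        Set.mem_preimage, Set.mem_setOf_eq]
      constructor
      · intro h
        refine ⟨gw G hd hreg i k ω, ?_, h⟩
        show ω ∈ ρ k ⁻¹' U (gw G hd hreg i k ω)
        rw [← hUeq]
        exact rfl
      · rintro ⟨v, hv, hsel⟩
        have hqv : gw G hd hreg i k ω = v := by
          have : ω ∈ ρ k ⁻¹' U v := hv
          rw [← hUeq] at this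
          exact this
        show gw G hd hreg i (k+1) ω = u
        rw [show gw G hd hreg i (k+1) ω
            = sel G hd hreg (gw G hd hreg i k ω) (rowf G hreg k (gw G hd hreg i k ω) ω) from rfl,
          hqv]
        exact hsel

lemma measQ (hd : 0 < d) (hreg : ∀ v : V, G.degree v = d) (i : V) (k : ℕ) (v : V) :
    MeasurableSet {ω | gw G hd hreg i k ω = v} := by
  obtain ⟨U, hU, hUeq⟩ := detQ G hd hreg i k v
  rw [hUeq]
  exact hU.preimage (measurable_ρ k)

lemma detY (hd : 0 < d) (hreg : ∀ v : V, G.degree v = d) (i : V) (k : ℕ)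
    {s : Set ℝ} (hs : MeasurableSet s) :
    ∃ U : Set (↥(SS V (k+1)) → ℝ),
      MeasurableSet U ∧ Yg G hd hreg i k ⁻¹' s = ρ (k+1) ⁻¹' U := by
  choose U hU hUeq using detQ G hd hreg i k
  refine ⟨⋃ v : V, (resS (Nat.le_succ k) ⁻¹' U v ∩
      rowres G hreg k v ⁻¹' (Ym ⁻¹' s)), ?_, ?_⟩
  · exact MeasurableSet.iUnion fun v =>
      ((hU v).preimage (measurable_resS _)).inter
        (((measurable_Ym hd) hs).preimage (measurable_rowres G hreg k v))
  · ext ω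
    simp only [Set.mem_preimage, Set.preimage_iUnion, Set.mem_iUnion, Set.mem_inter_iff,
      Set.mem_preimage]
    constructor
    · intro h
      refine ⟨gw G hd hreg i k ω, ?_, h⟩
      show ω ∈ ρ k ⁻¹' U (gw G hd hreg i k ω)
      rw [← hUeq]
      exact rfl
    · rintro ⟨v, hv, hY⟩
      have hqv : gw G hd hreg i k ω = v := by
        have : ω ∈ ρ k ⁻¹' U v := hv
        rw [← hUeq] at this
        exact this
      show Ym (rowf G hreg k (gw G hd hreg i k ω) ω) ∈ s
      rw [hqv]
      exact hY

lemma measY (hd : 0 < d) (hreg : ∀ v : V, G.degree v = d) (i : V) (k : ℕ) :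
    Measurable (Yg G hd hreg i k) := by
  intro s hs
  obtain ⟨U, hU, hUeq⟩ := detY G hd hreg i k hs
  rw [hUeq]
  exact hU.preimage (measurable_ρ (k+1))

end Det

section Prob

open ProbabilityTheory

variable {μ : Measure ℝ} [IsProbabilityMeasure μ]
variable {P : Measure (ℕ × V × V → ℝ)} [IsProbabilityMeasure P]

/-- law of the evaluation map under a finite product measure -/
lemma eval_law {κ : Type*} [Fintype κ] [DecidableEq κ] (r : κ) :
    (Measure.pi fun _ : κ => μ).map (fun x => x r) = μ := by
  ext s hs
  rw [Measure.map_apply (measurable_pi_apply r) hs]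
  have hpre : (fun x : κ → ℝ => x r) ⁻¹' s
      = Set.univ.pi (Function.update (fun _ : κ => (Set.univ : Set ℝ)) r s) := by
    ext x
    simp only [Set.mem_preimage, Set.mem_pi, Set.mem_univ, forall_true_left]
    constructor
    · intro h j
      rcases eq_or_ne j r with rfl | hj
      · simpa [Function.update] using h
      · simp [Function.update, hj]
    · intro h
      have := h r
      simpa [Function.update] using this
  rw [hpre, Measure.pi_pi]
  rw [Finset.prod_eq_single r (fun b _ hb => by simp [Function.update, hb])
    (fun h => absurd (Finset.mem_univ r) h)]
  simp [Function.update]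

/-- joint law of finitely many distinct coordinates is the product measure -/
lemma map_tuple_eq_pi
    (hindep : iIndepFun (fun c (ω : ℕ × V × V → ℝ) => ω c) P)
    (hlaw : ∀ c : ℕ × V × V, P.map (fun ω => ω c) = μ)
    {κ : Type*} [Fintype κ] [DecidableEq κ] (c : κ → ℕ × V × V) (hc : Function.Injective c) :
    P.map (fun ω k => ω (c k)) = Measure.pi fun _ : κ => μ := by
  classical
  refine (Measure.pi_eq fun s hs => ?_).symm
  have hmeas : Measurable (fun (ω : ℕ × V × V → ℝ) k => ω (c k)) :=
    measurable_pi_lambda _ fun k => measurable_pi_apply _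
  rw [Measure.map_apply hmeas (MeasurableSet.univ_pi hs)]
  -- assignment of a set to every coordinate
  set g : ℕ × V × V → Set (ℕ × V × V → ℝ) := fun j =>
    (fun ω => ω j) ⁻¹' (if h : ∃ k, c k = j then s h.choose else Set.univ) with hg
  have hgc : ∀ k, g (c k) = (fun ω : ℕ × V × V → ℝ => ω (c k)) ⁻¹' (s k) := by
    intro k
    have hex : ∃ k', c k' = c k := ⟨k, rfl⟩
    have : hex.choose = k := hc hex.choose_spec
    simp [hg, dif_pos hex, this]
  have hpre : (fun (ω : ℕ × V × V → ℝ) k => ω (c k)) ⁻¹' (Set.univ.pi s)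
      = ⋂ j ∈ Finset.univ.image c, g j := by
    ext ω
    simp only [Set.mem_preimage, Set.mem_pi, Set.mem_univ, forall_true_left, Set.mem_iInter,
      Finset.mem_image, Finset.mem_univ, true_and]
    constructor
    · rintro h j ⟨k, rfl⟩
      rw [hgc k]
      exact h k
    · intro h k
      have := h (c k) ⟨k, rfl⟩
      rw [hgc k] at this
      exact this
  rw [hpre]
  have hmeasg : ∀ j ∈ Finset.univ.image c,
      MeasurableSet[(inferInstance : MeasurableSpace ℝ).comap (fun ω : ℕ × V × V → ℝ => ω j)]
        (g j) := by
    intro j _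
    refine ⟨if h : ∃ k, c k = j then s h.choose else Set.univ, ?_, rfl⟩
    split_ifs with h
    · exact hs _
    · exact MeasurableSet.univ
  rw [hindep.meas_biInter hmeasg, Finset.prod_image (fun a _ b _ h => hc h)]
  refine Finset.prod_congr rfl fun k _ => ?_
  rw [hgc k, ← Measure.map_apply (measurable_pi_apply (c k)) (hs k), hlaw (c k)]

variable (G : SimpleGraph V) [DecidableRel G.Adj] {d : ℕ}

lemma measurable_rowf (hreg : ∀ v : V, G.degree v = d) (k : ℕ) (v : V) :
    Measurable (rowf G hreg k v) :=
  measurable_pi_lambda _ fun r => measurable_pi_apply _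

/-- the law of a row -/
lemma lawRow (hindep : iIndepFun (fun c (ω : ℕ × V × V → ℝ) => ω c) P)
    (hlaw : ∀ c : ℕ × V × V, P.map (fun ω => ω c) = μ)
    (hreg : ∀ v : V, G.degree v = d) (k : ℕ) (v : V) :
    P.map (rowf G hreg k v) = Measure.pi fun _ : Fin d => μ := by
  refine map_tuple_eq_pi hindep hlaw (fun r => (k, v, nbr G hreg v r)) ?_
  intro a b h
  apply nbr_inj G hreg v
  simpa using (congrArg (fun c : ℕ × V × V => c.2.2) h)

/-- the common law of the greedy gains -/
noncomputable def νY (μ : Measure ℝ) (d : ℕ) : Measure ℝ :=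
  (Measure.pi fun _ : Fin d => μ).map (Ym (d := d))

/-- The core conditioning identity. -/
lemma coreA (hindep : iIndepFun (fun c (ω : ℕ × V × V → ℝ) => ω c) P)
    (hlaw : ∀ c : ℕ × V × V, P.map (fun ω => ω c) = μ)
    (hd : 0 < d) (hreg : ∀ v : V, G.degree v = d) (i : V) (k : ℕ)
    {B : Set (↥(SS V k) → ℝ)} (hB : MeasurableSet B) {s : Set ℝ} (hs : MeasurableSet s) :
    P (ρ k ⁻¹' B ∩ Yg G hd hreg i k ⁻¹' s) = P (ρ k ⁻¹' B) * νY μ d s := by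
  classical
  choose U hU hUeq using detQ G hd hreg i k
  -- each row's pushforward computes νY
  have hν : ∀ v : V, P (rowf G hreg k v ⁻¹' (Ym ⁻¹' s)) = νY μ d s := by
    intro v
    rw [← Measure.map_apply (measurable_rowf G hreg k v) ((measurable_Ym hd) hs),
      lawRow G hindep hlaw hreg k v, νY,
      Measure.map_apply (measurable_Ym hd) hs]
  -- independence of the past and the current row
  have hIndep : ∀ v : V, IndepFun (ρ (V := V) k) (rowf G hreg k v) P := by
    intro v
    have hdisj : Disjoint (SS V k) ({k} ×ˢ (Finset.univ : Finset (V × V))) := by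
      rw [Finset.disjoint_left]
      intro c hc hc'
      have h1 : c.1 < k := mem_SS.mp hc
      have h2 : c.1 = k := by
        rcases Finset.mem_product.mp hc' with ⟨h, -⟩
        simpa using h
      omega
    have base := hindep.indepFun_finset (SS V k) ({k} ×ˢ (Finset.univ : Finset (V × V)))
      hdisj (fun c => measurable_pi_apply c)
    have hψ : Measurable (fun (f : ↥(({k} ×ˢ (Finset.univ : Finset (V × V))) : Finset (ℕ × V × V)) → ℝ)
        (r : Fin d) => f ⟨(k, v, nbr G hreg v r), by
          refine Finset.mem_product.mpr ⟨by simp, by simp⟩⟩) :=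
      measurable_pi_lambda _ fun r => measurable_pi_apply _
    exact base.comp measurable_id hψ
  -- decomposition over the current vertex
  have hdecomp : ρ k ⁻¹' B ∩ Yg G hd hreg i k ⁻¹' s
      = ⋃ v : V, ((ρ k ⁻¹' (B ∩ U v)) ∩ rowf G hreg k v ⁻¹' (Ym ⁻¹' s)) := by
    ext ω
    simp only [Set.mem_inter_iff, Set.mem_preimage, Set.mem_iUnion]
    constructor
    · rintro ⟨hB', hY⟩
      refine ⟨gw G hd hreg i k ω, ⟨hB', ?_⟩, ?_⟩
      · have : ω ∈ ρ k ⁻¹' U (gw G hd hreg i k ω) := by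
          rw [← hUeq]; exact rfl
        exact this
      · exact hY
    · rintro ⟨v, ⟨hB', hUv⟩, hY⟩
      have hqv : gw G hd hreg i k ω = v := by
        have : ω ∈ ρ k ⁻¹' U v := hUv
        rw [← hUeq] at this
        exact this
      refine ⟨hB', ?_⟩
      show Ym (rowf G hreg k (gw G hd hreg i k ω) ω) ∈ s
      rw [hqv]; exact hY
  have hmeas : ∀ v : V, MeasurableSet ((ρ (V := V) k ⁻¹' (B ∩ U v)) ∩ rowf G hreg k v ⁻¹' (Ym ⁻¹' s)) :=
    fun v => ((hB.inter (hU v)).preimage (measurable_ρ k)).inter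
      (((measurable_Ym hd) hs).preimage (measurable_rowf G hreg k v))
  have hdisj : Pairwise (Function.onFun Disjoint
      (fun v : V => (ρ k ⁻¹' (B ∩ U v)) ∩ rowf G hreg k v ⁻¹' (Ym ⁻¹' s))) := by
    intro v v' hvv'
    refine Set.disjoint_left.mpr ?_
    rintro ω ⟨h1, -⟩ ⟨h2, -⟩
    have e1 : gw G hd hreg i k ω = v := by
      have : ω ∈ ρ k ⁻¹' U v := h1.2
      rw [← hUeq] at this; exact this
    have e2 : gw G hd hreg i k ω = v' := by
      have : ω ∈ ρ k ⁻¹' U v' := h2.2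
      rw [← hUeq] at this; exact this
    exact hvv' (e1 ▸ e2)
  rw [hdecomp, measure_iUnion hdisj hmeas, tsum_fintype]
  have hterm : ∀ v : V, P ((ρ k ⁻¹' (B ∩ U v)) ∩ rowf G hreg k v ⁻¹' (Ym ⁻¹' s))
      = P (ρ k ⁻¹' (B ∩ U v)) * νY μ d s := by
    intro v
    rw [(hIndep v).measure_inter_preimage_eq_mul _ _ (hB.inter (hU v)) ((measurable_Ym hd) hs),
      hν v]
  simp_rw [hterm]
  rw [← Finset.sum_mul]
  congr 1
  have hpart : ρ (V := V) k ⁻¹' B = ⋃ v : V, ρ k ⁻¹' (B ∩ U v) := by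
    ext ω
    simp only [Set.mem_preimage, Set.mem_iUnion, Set.preimage_inter, Set.mem_inter_iff]
    constructor
    · intro h
      refine ⟨gw G hd hreg i k ω, h, ?_⟩
      have : ω ∈ ρ k ⁻¹' U (gw G hd hreg i k ω) := by rw [← hUeq]; exact rfl
      exact this
    · rintro ⟨v, h, -⟩
      exact h
  have hdisj' : Pairwise (Function.onFun Disjoint (fun v : V => ρ (V := V) k ⁻¹' (B ∩ U v))) := by
    intro v v' hvv'
    refine Set.disjoint_left.mpr ?_
    intro ω h1 h2
    have e1 : gw G hd hreg i k ω = v := by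
      have : ω ∈ ρ k ⁻¹' U v := h1.2
      rw [← hUeq] at this; exact this
    have e2 : gw G hd hreg i k ω = v' := by
      have : ω ∈ ρ k ⁻¹' U v' := h2.2
      rw [← hUeq] at this; exact this
    exact hvv' (e1 ▸ e2)
  rw [hpart, measure_iUnion hdisj' (fun v => (hB.inter (hU v)).preimage (measurable_ρ k)),
    tsum_fintype]

end Prob

section Prob2

open ProbabilityTheory

variable {μ : Measure ℝ} [IsProbabilityMeasure μ]
variable {P : Measure (ℕ × V × V → ℝ)} [IsProbabilityMeasure P]
variable (G : SimpleGraph V) [DecidableRel G.Adj] {d : ℕ}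

lemma lawY (hindep : iIndepFun (fun c (ω : ℕ × V × V → ℝ) => ω c) P)
    (hlaw : ∀ c : ℕ × V × V, P.map (fun ω => ω c) = μ)
    (hd : 0 < d) (hreg : ∀ v : V, G.degree v = d) (i : V) (k : ℕ) :
    P.map (Yg G hd hreg i k) = νY μ d := by
  ext s hs
  rw [Measure.map_apply (measY G hd hreg i k) hs]
  have := coreA G hindep hlaw hd hreg i k (B := Set.univ) MeasurableSet.univ hs
  simpa using this

lemma indepY (hindep : iIndepFun (fun c (ω : ℕ × V × V → ℝ) => ω c) P)
    (hlaw : ∀ c : ℕ × V × V, P.map (fun ω => ω c) = μ)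
    (hd : 0 < d) (hreg : ∀ v : V, G.degree v = d) (i : V) {j k : ℕ} (hjk : j < k) :
    IndepFun (Yg G hd hreg i j) (Yg G hd hreg i k) P := by
  rw [indepFun_iff_measure_inter_preimage_eq_mul]
  intro s t hs ht
  obtain ⟨U, hU, hUeq⟩ := detY G hd hreg i j hs
  have hjk' : j + 1 ≤ k := hjk
  have hYj : Yg G hd hreg i j ⁻¹' s = ρ k ⁻¹' (resS hjk' ⁻¹' U) := by
    rw [hUeq, ρ_comp_resS (V := V) hjk', Set.preimage_comp]
  have h1 := coreA G hindep hlaw hd hreg i k (B := resS hjk' ⁻¹' U)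
    (hU.preimage (measurable_resS hjk')) ht
  rw [← hYj] at h1
  rw [h1]
  congr 1
  rw [← Measure.map_apply (measY G hd hreg i k) ht, lawY G hindep hlaw hd hreg i k]

lemma pairwiseY (hindep : iIndepFun (fun c (ω : ℕ × V × V → ℝ) => ω c) P)
    (hlaw : ∀ c : ℕ × V × V, P.map (fun ω => ω c) = μ)
    (hd : 0 < d) (hreg : ∀ v : V, G.degree v = d) (i : V) :
    Pairwise (fun j k => IndepFun (Yg G hd hreg i j) (Yg G hd hreg i k) P) := by
  intro j k hjk
  rcases lt_or_gt_of_ne hjk with h | h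
  · exact indepY G hindep hlaw hd hreg i h
  · exact (indepY G hindep hlaw hd hreg i h).symm

lemma identY (hindep : iIndepFun (fun c (ω : ℕ × V × V → ℝ) => ω c) P)
    (hlaw : ∀ c : ℕ × V × V, P.map (fun ω => ω c) = μ)
    (hd : 0 < d) (hreg : ∀ v : V, G.degree v = d) (i : V) (k : ℕ) :
    IdentDistrib (Yg G hd hreg i k) (Yg G hd hreg i 0) P P :=
  ⟨(measY G hd hreg i k).aemeasurable, (measY G hd hreg i 0).aemeasurable, by
    rw [lawY G hindep hlaw hd hreg i k, lawY G hindep hlaw hd hreg i 0]⟩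

lemma integrable_eval_pi {κ : Type*} [Fintype κ] [DecidableEq κ] (r : κ)
    (hint : Integrable id μ) :
    Integrable (fun x : κ → ℝ => x r) (Measure.pi fun _ : κ => μ) := by
  have h : Integrable id ((Measure.pi fun _ : κ => μ).map (fun x => x r)) := by
    rw [eval_law (μ := μ) r]; exact hint
  have := (integrable_map_measure (f := fun x : κ → ℝ => x r) (g := id)
    h.aestronglyMeasurable (measurable_pi_apply r).aemeasurable).mp h
  simpa using this

lemma integrable_Ym (hd : 0 < d) (hint : Integrable id μ) :
    Integrable (Ym (d := d)) (Measure.pi fun _ : Fin d => μ) := by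
  have hsum : Integrable (fun x : Fin d → ℝ => ∑ r : Fin d, |x r|)
      (Measure.pi fun _ : Fin d => μ) :=
    integrable_finset_sum _ fun r _ => (integrable_eval_pi r hint).abs
  refine hsum.mono (measurable_Ym hd).aestronglyMeasurable ?_
  refine Filter.Eventually.of_forall fun x => ?_
  have h1 : 0 ≤ Ym x := Ym_nonneg x
  have h2 : Ym x ≤ ∑ r : Fin d, |x r| := Ym_le_sum_abs hd x
  have h3 : (0:ℝ) ≤ ∑ r : Fin d, |x r| := Finset.sum_nonneg fun r _ => abs_nonneg _
  simp only [Real.norm_eq_abs, abs_of_nonneg h1, abs_of_nonneg h3]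
  exact h2

lemma integrable_Y0 (hindep : iIndepFun (fun c (ω : ℕ × V × V → ℝ) => ω c) P)
    (hlaw : ∀ c : ℕ × V × V, P.map (fun ω => ω c) = μ)
    (hd : 0 < d) (hreg : ∀ v : V, G.degree v = d) (i : V) (hint : Integrable id μ) :
    Integrable (Yg G hd hreg i 0) P := by
  have hY0 : Yg G hd hreg i 0 = Ym ∘ rowf G hreg 0 i := rfl
  rw [hY0]
  refine (integrable_map_measure ?_ (measurable_rowf G hreg 0 i).aemeasurable).mp ?_
  · rw [lawRow G hindep hlaw hreg 0 i]
    exact (integrable_Ym hd hint).aestronglyMeasurable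
  · rw [lawRow G hindep hlaw hreg 0 i]
    exact integrable_Ym hd hint

lemma mean_Y0 (hindep : iIndepFun (fun c (ω : ℕ × V × V → ℝ) => ω c) P)
    (hlaw : ∀ c : ℕ × V × V, P.map (fun ω => ω c) = μ)
    (hd : 0 < d) (hreg : ∀ v : V, G.degree v = d) (i : V) :
    ∫ ω, Yg G hd hreg i 0 ω ∂P = ∫ y, Ym y ∂(Measure.pi fun _ : Fin d => μ) := by
  have hY0 : Yg G hd hreg i 0 = Ym ∘ rowf G hreg 0 i := rfl
  have := integral_map (φ := rowf G hreg 0 i) (f := Ym (d := d))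
    (measurable_rowf G hreg 0 i).aemeasurable
    (by rw [lawRow G hindep hlaw hreg 0 i]; exact (measurable_Ym hd).aestronglyMeasurable)
  rw [lawRow G hindep hlaw hreg 0 i] at this
  rw [hY0]
  simp only [Function.comp]
  rw [← this]

end Prob2

section Wseq

open ProbabilityTheory

variable {μ : Measure ℝ} [IsProbabilityMeasure μ]
variable {P : Measure (ℕ × V × V → ℝ)} [IsProbabilityMeasure P]

/-- the block of weights at time `k` -/
def blk (k : ℕ) (ω : ℕ × V × V → ℝ) : V × V → ℝ := fun uv => ω (k, uv.1, uv.2)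

lemma measurable_blk (k : ℕ) : Measurable (blk (V := V) k) :=
  measurable_pi_lambda _ fun uv => measurable_pi_apply _

/-- total weight at time `k`, used as an error bound -/
def Wg (k : ℕ) (ω : ℕ × V × V → ℝ) : ℝ := ∑ uv : V × V, |ω (k, uv.1, uv.2)|

lemma Wg_nonneg (k : ℕ) (ω : ℕ × V × V → ℝ) : 0 ≤ Wg (V := V) k ω :=
  Finset.sum_nonneg fun uv _ => abs_nonneg _

lemma abs_le_Wg (k : ℕ) (ω : ℕ × V × V → ℝ) (u v : V) : |ω (k, u, v)| ≤ Wg (V := V) k ω :=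
  Finset.single_le_sum (f := fun uv : V × V => |ω (k, uv.1, uv.2)|)
    (fun uv _ => abs_nonneg _) (Finset.mem_univ (u, v))

/-- the sum functional on blocks -/
def sumAbs : ((V × V) → ℝ) → ℝ := fun f => ∑ uv : V × V, |f uv|

lemma measurable_sumAbs : Measurable (sumAbs (V := V)) :=
  Finset.measurable_sum _ fun uv _ => (measurable_pi_apply uv).abs

lemma Wg_eq (k : ℕ) : Wg (V := V) k = sumAbs ∘ blk k := rfl

lemma measurable_Wg (k : ℕ) : Measurable (Wg (V := V) k) := by
  rw [Wg_eq]; exact measurable_sumAbs.comp (measurable_blk k)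

lemma lawBlk (hindep : iIndepFun (fun c (ω : ℕ × V × V → ℝ) => ω c) P)
    (hlaw : ∀ c : ℕ × V × V, P.map (fun ω => ω c) = μ) (k : ℕ) :
    P.map (blk (V := V) k) = Measure.pi fun _ : V × V => μ := by
  refine map_tuple_eq_pi hindep hlaw (fun uv : V × V => (k, uv.1, uv.2)) ?_
  intro a b h
  have h1 := congrArg (fun c : ℕ × V × V => c.2.1) h
  have h2 := congrArg (fun c : ℕ × V × V => c.2.2) h
  exact Prod.ext h1 h2

lemma identW (hindep : iIndepFun (fun c (ω : ℕ × V × V → ℝ) => ω c) P)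
    (hlaw : ∀ c : ℕ × V × V, P.map (fun ω => ω c) = μ) (k : ℕ) :
    IdentDistrib (Wg (V := V) k) (Wg (V := V) 0) P P := by
  have hblk : IdentDistrib (blk (V := V) k) (blk (V := V) 0) P P :=
    ⟨(measurable_blk k).aemeasurable, (measurable_blk 0).aemeasurable, by
      rw [lawBlk hindep hlaw k, lawBlk hindep hlaw 0]⟩
  simpa [← Wg_eq] using hblk.comp measurable_sumAbs

lemma pairwiseW (hindep : iIndepFun (fun c (ω : ℕ × V × V → ℝ) => ω c) P) :
    Pairwise (fun j k => IndepFun (Wg (V := V) j) (Wg (V := V) k) P) := by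
  have key : ∀ j k : ℕ, j ≠ k → IndepFun (Wg (V := V) j) (Wg (V := V) k) P := by
    intro j k hjk
    have hdisj : Disjoint ({j} ×ˢ (Finset.univ : Finset (V × V)))
        ({k} ×ˢ (Finset.univ : Finset (V × V))) := by
      rw [Finset.disjoint_left]
      intro c hc hc'
      have h1 : c.1 = j := by simpa using (Finset.mem_product.mp hc).1
      have h2 : c.1 = k := by simpa using (Finset.mem_product.mp hc').1
      exact hjk (h1 ▸ h2)
    have base := hindep.indepFun_finset _ _ hdisj (fun c => measurable_pi_apply c)
    have hφ : ∀ m : ℕ, Measurable (fun (f : ↥(({m} ×ˢ (Finset.univ : Finset (V × V))) : Finset (ℕ × V × V)) → ℝ) =>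
        ∑ uv : V × V, |f ⟨(m, uv.1, uv.2), Finset.mem_product.mpr ⟨by simp, by simp⟩⟩|) :=
      fun m => Finset.measurable_sum _ fun uv _ => (measurable_pi_apply _).abs
    exact base.comp (hφ j) (hφ k)
  intro j k hjk
  exact key j k hjk

lemma integrable_W0 (hindep : iIndepFun (fun c (ω : ℕ × V × V → ℝ) => ω c) P)
    (hlaw : ∀ c : ℕ × V × V, P.map (fun ω => ω c) = μ) (hint : Integrable id μ) :
    Integrable (Wg (V := V) 0) P := by
  rw [Wg_eq]
  refine (integrable_map_measure ?_ (measurable_blk 0).aemeasurable).mp ?_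
  · rw [lawBlk hindep hlaw 0]
    exact measurable_sumAbs.aestronglyMeasurable
  · rw [lawBlk hindep hlaw 0]
    exact integrable_finset_sum _ fun uv _ => (integrable_eval_pi uv hint).abs

end Wseq

section Comb

variable (G : SimpleGraph V) [DecidableRel G.Adj] {d : ℕ}

open Classical in
/-- length of a chosen return walk to `i` -/
noncomputable def retLen (i v : V) : ℕ :=
  if h : G.Reachable v i then h.some.length else 0

/-- uniform bound on return-walk lengths, at least 1 -/
noncomputable def DD (i : V) : ℕ := (Finset.univ.sup (retLen G i)) + 1

lemma retLen_le (i v : V) : retLen G i v < DD G i :=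
  Nat.lt_succ_of_le (Finset.le_sup (Finset.mem_univ v))

lemma one_le_DD (i : V) : 1 ≤ DD G i := Nat.le_add_left 1 _

lemma reach_gw (hd : 0 < d) (hreg : ∀ v : V, G.degree v = d) (i : V) (ω : ℕ × V × V → ℝ) :
    ∀ k : ℕ, G.Reachable (gw G hd hreg i k ω) i := by
  intro k
  induction k with
  | zero => exact SimpleGraph.Reachable.refl i
  | succ k ih =>
    show G.Reachable (sel G hd hreg (gw G hd hreg i k ω) (rowf G hreg k (gw G hd hreg i k ω) ω)) i
    unfold sel
    split_ifs with h
    · exact ((nbr_adj G hreg (gw G hd hreg i k ω) _).reachable).symm.trans ih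
    · exact ih

lemma walkBound (hd : 0 < d) (hreg : ∀ v : V, G.degree v = d) (i : V) (ω : ℕ × V × V → ℝ)
    (t : ℕ) (ht : DD G i ≤ t) :
    (∑ k ∈ Finset.range (t - DD G i), Yg G hd hreg i k ω)
      - ((∑ k ∈ Finset.range t, Wg k ω) - (∑ k ∈ Finset.range (t - DD G i), Wg k ω))
      ≤ pathMaxInf G t i i ω := by
  classical
  set D := DD G i with hD
  set n := t - D with hn
  have hnt : n ≤ t := Nat.sub_le t D
  have h1D : 1 ≤ D := one_le_DD G i
  have h1t : 1 ≤ t := le_trans h1D ht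
  -- the return walk
  have hre : G.Reachable (gw G hd hreg i n ω) i := reach_gw G hd hreg i ω n
  set w : G.Walk (gw G hd hreg i n ω) i := hre.some with hw
  have hL : w.length < D := by
    have : retLen G i (gw G hd hreg i n ω) = w.length := by
      rw [retLen, dif_pos hre]
    rw [← this]
    exact retLen_le G i _
  -- the concatenated trajectory
  set pp : ℕ → V := fun a => if a ≤ n then gw G hd hreg i a ω else w.getVert (a - n) with hpp
  have hppa : ∀ a, n ≤ a → pp a = w.getVert (a - n) := by
    intro a hna
    by_cases h : a ≤ n
    · have : a = n := le_antisymm h hna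
      subst this
      simp [hpp, SimpleGraph.Walk.getVert_zero]
    · simp [hpp, h]
  set p : Fin (t + 1) → V := fun k => pp k.val with hp
  have hwalk : IsWalkWithLoops G t i i p := by
    refine ⟨?_, ?_, ?_⟩
    · show pp (0 : Fin (t+1)).val = i
      simp only [Fin.val_zero]
      simp [hpp, Nat.zero_le n]
      rfl
    · show pp (Fin.last t).val = i
      simp only [Fin.val_last]
      rw [hppa t hnt]
      have hDn : t - n = D := by omega
      rw [hDn]
      exact w.getVert_of_length_le (le_of_lt hL)
    · intro k
      have hcast : (k.castSucc : Fin (t+1)).val = k.val := rfl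
      have hsucc : (k.succ : Fin (t+1)).val = k.val + 1 := rfl
      show pp (k.val + 1) = pp k.val ∨ G.Adj (pp k.val) (pp (k.val + 1))
      by_cases h1 : k.val + 1 ≤ n
      · have h0 : k.val ≤ n := le_trans (Nat.le_succ _) h1
        rw [hpp]
        simp only [h1, if_pos, h0]
        have : gw G hd hreg i (k.val + 1) ω
            = sel G hd hreg (gw G hd hreg i k.val ω) (rowf G hreg k.val (gw G hd hreg i k.val ω) ω) := rfl
        rw [this]
        unfold sel
        split_ifs with hpos
        · exact Or.inr (nbr_adj G hreg _ _)
        · exact Or.inl rfl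
      · have h2 : n ≤ k.val := by omega
        rw [hppa _ h2, hppa _ (le_trans h2 (Nat.le_succ _))]
        have hstep : k.val + 1 - n = (k.val - n) + 1 := by omega
        rw [hstep]
        by_cases hm : k.val - n < w.length
        · exact Or.inr (w.adj_getVert_succ hm)
        · left
          rw [w.getVert_of_length_le (by omega : w.length ≤ k.val - n),
            w.getVert_of_length_le (by omega : w.length ≤ k.val - n + 1)]
  -- the weight collected along the trajectory
  set F : ℕ → ℝ := fun a => if pp a = pp (a + 1) then 0 else ω (a, pp a, pp (a + 1)) with hF
  have hsum : (∑ k : Fin t, if p k.castSucc = p k.succ then 0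
      else ω ((k : ℕ), p k.castSucc, p k.succ)) = ∑ a ∈ Finset.range t, F a := by
    rw [← Fin.sum_univ_eq_sum_range F t]
    exact Finset.sum_congr rfl fun k _ => rfl
  have hsplit : ∑ a ∈ Finset.Ico n t, F a
      = ∑ a ∈ Finset.range t, F a - ∑ a ∈ Finset.range n, F a :=
    Finset.sum_Ico_eq_sub F hnt
  have hgreedy : ∀ a ∈ Finset.range n, F a = Yg G hd hreg i a ω := by
    intro a ha
    have ha' : a < n := Finset.mem_range.mp ha
    have h0 : a ≤ n := le_of_lt ha'
    have h1 : a + 1 ≤ n := ha'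
    have e0 : pp a = gw G hd hreg i a ω := by simp [hpp, h0]
    have e1 : pp (a + 1) = gw G hd hreg i (a + 1) ω := by simp [hpp, h1]
    have egw : gw G hd hreg i (a + 1) ω
        = sel G hd hreg (gw G hd hreg i a ω) (rowf G hreg a (gw G hd hreg i a ω) ω) := rfl
    set x : Fin d → ℝ := rowf G hreg a (gw G hd hreg i a ω) ω with hx
    show (if pp a = pp (a + 1) then 0 else ω (a, pp a, pp (a + 1))) = Yg G hd hreg i a ω
    rw [e0, e1, egw]
    unfold sel
    split_ifs with hpos heq heq
    · exact absurd heq.symm (nbr_adj G hreg _ _).ne'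
    · show ω (a, gw G hd hreg i a ω, nbr G hreg (gw G hd hreg i a ω) (amax hd x)) = Yg G hd hreg i a ω
      have hterm : ω (a, gw G hd hreg i a ω, nbr G hreg (gw G hd hreg i a ω) (amax hd x))
          = x (amax hd x) := rfl
      rw [hterm, Yg, Ym, ← hx, sup_eq_amax hd x, max_eq_right]
      rw [sup_eq_amax hd x] at hpos
      exact le_of_lt hpos
    · show (0:ℝ) = Yg G hd hreg i a ω
      rw [Yg, Ym, ← hx, max_eq_left (not_lt.mp hpos)]
    · exact absurd rfl heq
  have htail : ∑ a ∈ Finset.Ico n t, (-(Wg (V := V) a ω)) ≤ ∑ a ∈ Finset.Ico n t, F a := by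
    refine Finset.sum_le_sum fun a _ => ?_
    show -(Wg (V := V) a ω) ≤ if pp a = pp (a + 1) then 0 else ω (a, pp a, pp (a + 1))
    split_ifs with h
    · simpa using Wg_nonneg (V := V) a ω
    · calc -(Wg (V := V) a ω) ≤ -|ω (a, pp a, pp (a+1))| := by
            simpa using abs_le_Wg a ω (pp a) (pp (a+1))
      _ ≤ ω (a, pp a, pp (a+1)) := neg_abs_le _
  have hico : ∑ a ∈ Finset.Ico n t, (-(Wg (V := V) a ω))
      = -((∑ k ∈ Finset.range t, Wg k ω) - (∑ k ∈ Finset.range n, Wg k ω)) := by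
    rw [Finset.sum_neg_distrib, Finset.sum_Ico_eq_sub _ hnt]
  -- conclude
  have hchain : (∑ k ∈ Finset.range n, Yg G hd hreg i k ω)
      - ((∑ k ∈ Finset.range t, Wg k ω) - (∑ k ∈ Finset.range n, Wg k ω))
      ≤ ∑ a ∈ Finset.range t, F a := by
    have h1 := htail
    rw [hico, hsplit] at h1
    have h2 : ∑ a ∈ Finset.range n, F a = ∑ k ∈ Finset.range n, Yg G hd hreg i k ω :=
      Finset.sum_congr rfl hgreedy
    linarith
  refine le_trans ?_ (le_ciSup (f := fun p : {p : Fin (t + 1) → V // IsWalkWithLoops G t i i p} =>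
      ∑ k : Fin t, if p.1 k.castSucc = p.1 k.succ then 0
        else ω ((k : ℕ), p.1 k.castSucc, p.1 k.succ))
    (Set.Finite.bddAbove (Set.finite_range _)) ⟨p, hwalk⟩)
  rw [hsum]
  exact hchain

lemma upBound (t : ℕ) (j i : V) (ω : ℕ × V × V → ℝ) :
    pathMaxInf G t j i ω ≤ ∑ k ∈ Finset.range t, Wg k ω := by
  classical
  rw [pathMaxInf]
  rcases isEmpty_or_nonempty {p : Fin (t + 1) → V // IsWalkWithLoops G t j i p} with he | hne
  · rw [Real.iSup_of_isEmpty]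
    exact Finset.sum_nonneg fun k _ => Wg_nonneg k ω
  · refine ciSup_le fun q => ?_
    have : ∀ k : Fin t, (if q.1 k.castSucc = q.1 k.succ then 0
        else ω ((k : ℕ), q.1 k.castSucc, q.1 k.succ)) ≤ Wg (V := V) (k : ℕ) ω := by
      intro k
      split_ifs with h
      · exact Wg_nonneg _ ω
      · exact le_trans (le_abs_self _) (abs_le_Wg _ ω _ _)
    calc (∑ k : Fin t, if q.1 k.castSucc = q.1 k.succ then 0
        else ω ((k : ℕ), q.1 k.castSucc, q.1 k.succ))
        ≤ ∑ k : Fin t, Wg (V := V) (k : ℕ) ω := Finset.sum_le_sum fun k _ => this k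
      _ = ∑ k ∈ Finset.range t, Wg k ω := Fin.sum_univ_eq_sum_range (fun a => Wg (V := V) a ω) t

end Comb
end LPPaux

open Topology in
open LPPaux in
/-- for a `d`-regular graph (`d ≥ 1`) and i.i.d. noise with law `μ` of
finite first moment, almost surely
`liminf_{t → ∞} (1/t) max_{j ∈ V} M_t^{(i,j)}(ω) ≥ m₊(d)`. -/
theorem liminf_pathMax_ge_regular {V : Type*} [Fintype V] [DecidableEq V]
    (G : SimpleGraph V) [DecidableRel G.Adj]
    (d : ℕ) (hd : 1 ≤ d) (hreg : ∀ v : V, G.degree v = d)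
    (μ : Measure ℝ) [IsProbabilityMeasure μ] (hint : Integrable id μ)
    (P : Measure (ℕ × V × V → ℝ)) [IsProbabilityMeasure P]
    (hindep : ProbabilityTheory.iIndepFun
      (fun c (ω : ℕ × V × V → ℝ) => ω c) P)
    (hlaw : ∀ c : ℕ × V × V, P.map (fun ω => ω c) = μ)
    (i : V) :
    ∀ᵐ ω ∂P, mPlus μ d ≤
      Filter.liminf (fun t : ℕ => (⨆ j : V, pathMaxInf G t j i ω) / t) Filter.atTop := by
  classical
  have hd0 : 0 < d := hd
  haveI : Nonempty V := ⟨i⟩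
  have hmean : ∫ ω, Yg G hd0 hreg i 0 ω ∂P = mPlus μ d := by
    rw [mean_Y0 G hindep hlaw hd0 hreg i]
    rfl
  have hYlln := ProbabilityTheory.strong_law_ae_real (Yg G hd0 hreg i)
    (integrable_Y0 G hindep hlaw hd0 hreg i hint)
    (pairwiseY G hindep hlaw hd0 hreg i)
    (identY G hindep hlaw hd0 hreg i)
  rw [hmean] at hYlln
  set c : ℝ := ∫ ω, Wg (V := V) 0 ω ∂P with hc
  have hWlln := ProbabilityTheory.strong_law_ae_real (Wg (V := V))
    (integrable_W0 hindep hlaw hint)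
    (pairwiseW hindep)
    (identW hindep hlaw)
  rw [← hc] at hWlln
  filter_upwards [hYlln, hWlln] with ω hY hW
  set D : ℕ := DD G i with hD
  set A : ℕ → ℝ := fun t => ⨆ j : V, pathMaxInf G t j i ω with hA
  set SY : ℕ → ℝ := fun n => ∑ k ∈ Finset.range n, Yg G hd0 hreg i k ω with hSY
  set TW : ℕ → ℝ := fun n => ∑ k ∈ Finset.range n, Wg (V := V) k ω with hTW
  have hlow : ∀ t : ℕ, D ≤ t → SY (t - D) - (TW t - TW (t - D)) ≤ A t := by
    intro t ht
    refine le_trans (walkBound G hd0 hreg i ω t ht) ?_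
    exact le_ciSup (f := fun j : V => pathMaxInf G t j i ω)
      (Set.Finite.bddAbove (Set.finite_range _)) i
  have hup : ∀ t : ℕ, A t ≤ TW t := fun t => ciSup_le fun j => upBound G t j i ω
  -- limits
  have hfrac : Tendsto (fun t : ℕ => ((t - D : ℕ) : ℝ) / (t : ℝ)) atTop (𝓝 1) := by
    have h1 : Tendsto (fun t : ℕ => 1 - (D : ℝ) / (t : ℝ)) atTop (𝓝 1) := by
      have := (tendsto_const_nhds (x := (1:ℝ)) (f := atTop (α := ℕ))).sub
        (tendsto_const_div_atTop_nhds_zero_nat (D : ℝ))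
      simpa using this
    refine h1.congr' ?_
    filter_upwards [eventually_ge_atTop (D + 1)] with t ht
    have htD : D ≤ t := le_trans (Nat.le_succ D) ht
    have ht0 : (0:ℝ) < (t : ℝ) := by
      have : 0 < t := lt_of_lt_of_le (Nat.succ_pos D) ht
      exact_mod_cast this
    rw [Nat.cast_sub htD, sub_div, div_self ht0.ne']
  have hSYn : Tendsto (fun t : ℕ => SY (t - D) / ((t - D : ℕ) : ℝ)) atTop (𝓝 (mPlus μ d)) := by
    have := hY.comp (tendsto_sub_atTop_nat D)
    exact this
  have hTWn : Tendsto (fun t : ℕ => TW (t - D) / ((t - D : ℕ) : ℝ)) atTop (𝓝 c) := by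
    have := hW.comp (tendsto_sub_atTop_nat D)
    exact this
  have hSYt : Tendsto (fun t : ℕ => SY (t - D) / (t : ℝ)) atTop (𝓝 (mPlus μ d)) := by
    have h2 := hSYn.mul hfrac
    rw [mul_one] at h2
    refine h2.congr' ?_
    filter_upwards [eventually_ge_atTop (D + 1)] with t ht
    have htD1 : 1 ≤ t - D := by omega
    have hb0 : ((t - D : ℕ) : ℝ) ≠ 0 := by
      have : 0 < t - D := htD1
      positivity
    field_simp
  have hTWnt : Tendsto (fun t : ℕ => TW (t - D) / (t : ℝ)) atTop (𝓝 c) := by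
    have h2 := hTWn.mul hfrac
    rw [mul_one] at h2
    refine h2.congr' ?_
    filter_upwards [eventually_ge_atTop (D + 1)] with t ht
    have htD1 : 1 ≤ t - D := by omega
    have hb0 : ((t - D : ℕ) : ℝ) ≠ 0 := by
      have : 0 < t - D := htD1
      positivity
    field_simp
  have hg : Tendsto (fun t : ℕ => SY (t - D) / (t : ℝ) - (TW t / (t : ℝ) - TW (t - D) / (t : ℝ)))
      atTop (𝓝 (mPlus μ d)) := by
    have := hSYt.sub (hW.sub hTWnt)
    simpa using this
  have ev1 : ∀ᶠ t : ℕ in atTop,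
      SY (t - D) / (t : ℝ) - (TW t / (t : ℝ) - TW (t - D) / (t : ℝ)) ≤ A t / (t : ℝ) := by
    filter_upwards [eventually_ge_atTop (D + 1)] with t ht
    have htD : D ≤ t := le_trans (Nat.le_succ D) ht
    have ht0 : (0:ℝ) < (t : ℝ) := by
      have : 0 < t := lt_of_lt_of_le (Nat.succ_pos D) ht
      exact_mod_cast this
    have h1 := hlow t htD
    calc SY (t - D) / (t : ℝ) - (TW t / (t : ℝ) - TW (t - D) / (t : ℝ))
        = (SY (t - D) - (TW t - TW (t - D))) / (t : ℝ) := by ring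
      _ ≤ A t / (t : ℝ) := by
          exact div_le_div_of_nonneg_right h1 ht0.le |>.trans_eq rfl
  have hcb : IsCoboundedUnder (· ≥ ·) atTop (fun t : ℕ => A t / (t : ℝ)) := by
    refine isCoboundedUnder_ge_of_eventually_le atTop (x := c + 1) ?_
    filter_upwards [hW.eventually_le_const (lt_add_one c), eventually_ge_atTop 1] with t h1 h2
    have ht0 : (0:ℝ) < (t : ℝ) := by exact_mod_cast h2
    exact le_trans (div_le_div_of_nonneg_right (hup t) ht0.le |>.trans_eq rfl) h1
  have hb : IsBoundedUnder (· ≥ ·) atTop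
      (fun t : ℕ => SY (t - D) / (t : ℝ) - (TW t / (t : ℝ) - TW (t - D) / (t : ℝ))) :=
    hg.isBoundedUnder_ge
  show mPlus μ d ≤ liminf (fun t : ℕ => A t / (t : ℝ)) atTop
  calc mPlus μ d
      = liminf (fun t : ℕ => SY (t - D) / (t : ℝ) - (TW t / (t : ℝ) - TW (t - D) / (t : ℝ))) atTop :=
        hg.liminf_eq.symm
    _ ≤ liminf (fun t : ℕ => A t / (t : ℝ)) atTop := liminf_le_liminf ev1 hb hcb
end

section
/- Let μ be a probability measure on ℝ with moment generating function M, and let p ∈ [0,1). For C > 0 define M_C(γ) = p·e^{−Cγ} + (1−p)·M(γ). Then for every x ∈ ℝ, with all suprema taken in the extended reals [−∞,+∞]: sup_{C > 0} sup_{γ > 0} ( x·γ − log M_C(γ) ) = sup_{γ > 0} ( x·γ − log((1−p)·M(γ)) ). -/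
open MeasureTheory
open scoped ENNReal

/-- The (possibly infinite) moment generating function of `μ`,
`M(γ) = ∫ e^{γ y} dμ(y) ∈ (0, +∞]`. -/
noncomputable def mgfE (μ : Measure ℝ) (γ : ℝ) : ℝ≥0∞ :=
  ∫⁻ y, ENNReal.ofReal (Real.exp (γ * y)) ∂μ

/-- with `M_C(γ) = p e^{−Cγ} + (1−p) M(γ)`, for every real `x`,
`sup_{C > 0} sup_{γ > 0} (xγ − log M_C(γ)) = sup_{γ > 0} (xγ − log((1−p) M(γ)))`,
all suprema and the expressions being taken in the extended reals `[−∞, +∞]`. -/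
theorem sup_rate_deleted_edges (μ : Measure ℝ) [IsProbabilityMeasure μ]
    (p : ℝ) (hp : p ∈ Set.Ico (0 : ℝ) 1) (x : ℝ) :
    (⨆ C : {c : ℝ // 0 < c}, ⨆ γ : {g : ℝ // 0 < g},
        ((x * γ : ℝ) : EReal) -
          ENNReal.log (ENNReal.ofReal p * ENNReal.ofReal (Real.exp (-(C : ℝ) * γ)) +
            ENNReal.ofReal (1 - p) * mgfE μ γ)) =
      ⨆ γ : {g : ℝ // 0 < g},
        ((x * γ : ℝ) : EReal) - ENNReal.log (ENNReal.ofReal (1 - p) * mgfE μ γ) := by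
  obtain ⟨hp0, hp1⟩ := hp
  have hq1 : (0:ℝ) < 1 - p := by linarith
  apply le_antisymm
  · refine iSup_le fun C => iSup_le fun γ => ?_
    refine le_trans ?_ (le_iSup _ γ)
    exact EReal.sub_le_sub le_rfl (ENNReal.log_monotone le_add_self)
  · refine iSup_le fun γ => ?_
    have hγ : (0:ℝ) < γ := γ.2
    set q : ℝ≥0∞ := ENNReal.ofReal (1 - p) * mgfE μ γ with hqdef
    have hM0 : 0 < mgfE μ γ := by
      rw [mgfE, lintegral_pos_iff_support (by fun_prop)]
      have hs : Function.support (fun y => ENNReal.ofReal (Real.exp ((γ:ℝ) * y)))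
          = Set.univ := by
        ext y
        simp [Function.mem_support, (ENNReal.ofReal_pos.2 (Real.exp_pos _)).ne']
      rw [hs]
      simp
    have hq0 : 0 < q :=
      ENNReal.mul_pos (by simp [ENNReal.ofReal_pos.2 hq1, (ENNReal.ofReal_pos.2 hq1).ne'])
        hM0.ne'
    rcases eq_or_ne q ⊤ with htop | htop
    · rw [htop]
      simp only [ENNReal.log_top, EReal.sub_top]
      exact bot_le
    -- q is finite and positive
    have hqR : 0 < q.toReal := ENNReal.toReal_pos hq0.ne' htop
    have hlogq : ENNReal.log q = (Real.log q.toReal : EReal) := ENNReal.log_pos_real' hqR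
    rw [hlogq]
    have : ((x * γ : ℝ) : EReal) - (Real.log q.toReal : EReal)
        = ((x * γ - Real.log q.toReal : ℝ) : EReal) := by
      rw [EReal.coe_sub]
    rw [this]
    set r : ℝ := x * γ - Real.log q.toReal with hr
    refine le_of_forall_lt_imp_le_of_dense fun d hd => ?_
    obtain ⟨c, hdc, hcr⟩ := EReal.exists_between_coe_real hd
    refine hdc.le.trans ?_
    have hcr' : c < r := by exact_mod_cast hcr
    set ε : ℝ := r - c with hε
    have hε0 : 0 < ε := by simp [hε]; linarith
    -- find δ > 0 with ofReal δ ≤ q * ofReal (exp ε - 1)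
    set t : ℝ≥0∞ := q * ENNReal.ofReal (Real.exp ε - 1) with ht
    have hexpε : (1:ℝ) < Real.exp ε := Real.one_lt_exp_iff.2 hε0
    have ht0 : 0 < t := ENNReal.mul_pos hq0.ne' (by simp [ENNReal.ofReal_pos]; linarith)
    obtain ⟨δ, hδ0, hδt⟩ : ∃ δ : ℝ, 0 < δ ∧ ENNReal.ofReal δ ≤ t := by
      rcases eq_or_ne t ⊤ with h | h
      · exact ⟨1, one_pos, by simp [h]⟩
      · refine ⟨t.toReal, ENNReal.toReal_pos ht0.ne' h, ?_⟩
        rw [ENNReal.ofReal_toReal h]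
    -- choose C large
    refine le_trans ?_ (le_iSup _ ⟨max 1 (-Real.log δ / γ), lt_of_lt_of_le one_pos (le_max_left _ _)⟩)
    refine le_trans ?_ (le_iSup _ γ)
    set C : ℝ := max 1 (-Real.log δ / γ) with hC
    have hCγ : Real.exp (-C * γ) ≤ δ := by
      have h1 : -Real.log δ / γ ≤ C := le_max_right _ _
      have h2 : -Real.log δ ≤ C * γ := (div_le_iff₀ hγ).1 h1
      calc Real.exp (-C * γ) ≤ Real.exp (Real.log δ) := Real.exp_le_exp.2 (by linarith)
        _ = δ := Real.exp_log hδ0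
    -- bound the argument of log
    have hbound : ENNReal.ofReal p * ENNReal.ofReal (Real.exp (-C * γ)) + q
        ≤ q * ENNReal.ofReal (Real.exp ε) := by
      have h1 : ENNReal.ofReal p * ENNReal.ofReal (Real.exp (-C * γ)) ≤ t := by
        calc ENNReal.ofReal p * ENNReal.ofReal (Real.exp (-C * γ))
            ≤ 1 * ENNReal.ofReal δ := by
              exact mul_le_mul' (ENNReal.ofReal_le_one.2 hp1.le) (ENNReal.ofReal_le_ofReal hCγ)
          _ = ENNReal.ofReal δ := one_mul _
          _ ≤ t := hδt
      have h2 : q * ENNReal.ofReal (Real.exp ε) = q + t := by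
        have : Real.exp ε = 1 + (Real.exp ε - 1) := by ring
        rw [this, ENNReal.ofReal_add zero_le_one (by linarith), mul_add, ENNReal.ofReal_one,
          mul_one, ht]
      rw [h2, add_comm q t]
      exact add_le_add_left h1 q
    have hlog : ENNReal.log (ENNReal.ofReal p * ENNReal.ofReal (Real.exp (-C * γ)) + q)
        ≤ ((Real.log q.toReal + ε : ℝ) : EReal) := by
      calc ENNReal.log (ENNReal.ofReal p * ENNReal.ofReal (Real.exp (-C * γ)) + q)
          ≤ ENNReal.log (q * ENNReal.ofReal (Real.exp ε)) := ENNReal.log_monotone hbound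
        _ = ENNReal.log q + ENNReal.log (ENNReal.ofReal (Real.exp ε)) := ENNReal.log_mul_add
        _ = ((Real.log q.toReal + ε : ℝ) : EReal) := by
            rw [hlogq, ENNReal.log_ofReal_of_pos (Real.exp_pos _), Real.log_exp,
              EReal.coe_add]
    have hc : c = x * ↑γ - (Real.log q.toReal + ε) := by rw [hε, hr]; ring
    calc ((c : ℝ) : EReal) = ((x * γ - (Real.log q.toReal + ε) : ℝ) : EReal) := by
          rw [hc]
      _ ≤ ((x * γ : ℝ) : EReal) -
            ENNReal.log (ENNReal.ofReal p * ENNReal.ofReal (Real.exp (-C * γ)) + q) := by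
          rw [EReal.coe_sub]
          exact EReal.sub_le_sub le_rfl hlog
end

section
/- Let μ be a probability measure on ℝ whose moment generating function M(γ) is finite for every γ > 0, let K > 0 and x > 0. Then, with values in the extended reals [−∞,+∞], sup_{β ∈ [0,1]} inf_{γ > 0} [ H(β) + β·log K + β·log M(γ) − x·γ ] = inf_{γ > 0} [ log(1 + K·M(γ)) − x·γ ]. (Note that for β ∈ (0,1] the inner infimum equals H(β) + β·log K − β·I(x/β), where I is the large deviation rate function of μ.) -/
open MeasureTheory

open MeasureTheory Real Set Filter Topology
open scoped ENNReal

namespace SupInfAux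

noncomputable def Fl (t : ℝ) : ℝ := Real.log (1 + Real.exp t)
noncomputable def sig (t : ℝ) : ℝ := Real.exp t / (1 + Real.exp t)

lemma one_add_exp_pos (t : ℝ) : 0 < 1 + rexp t := by positivity

lemma sig_mem (t : ℝ) : sig t ∈ Set.Ioo (0:ℝ) 1 := by
  constructor
  · exact div_pos (exp_pos t) (one_add_exp_pos t)
  · rw [sig, div_lt_one (one_add_exp_pos t)]; linarith

lemma hasDerivAt_Fl (t : ℝ) : HasDerivAt Fl (sig t) t := by
  have h : HasDerivAt (fun s : ℝ => 1 + rexp s) (rexp t) t :=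
    (Real.hasDerivAt_exp t).const_add 1
  exact h.log (one_add_exp_pos t).ne'

lemma continuous_Fl : Continuous Fl := by
  have : Continuous fun t : ℝ => 1 + rexp t := continuous_const.add Real.continuous_exp
  exact this.log fun t => (one_add_exp_pos t).ne'

lemma Fl_mono : Monotone Fl := fun a b hab =>
  Real.log_le_log (one_add_exp_pos a) (by have := Real.exp_le_exp.2 hab; linarith)

lemma Fl_split (t : ℝ) : Fl t = t + Real.log (1 + rexp (-t)) := by
  have h : (1:ℝ) + rexp t = rexp t * (1 + rexp (-t)) := by
    rw [mul_add, mul_one, ← Real.exp_add]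
    simp [add_comm]
  rw [Fl, h, Real.log_mul (exp_pos t).ne' (one_add_exp_pos (-t)).ne', Real.log_exp]

lemma binH_one : binH 1 = 0 := by simp [binH]

lemma binH_sig_add (t : ℝ) : binH (sig t) + sig t * t = Fl t := by
  have h1 := one_add_exp_pos t
  have hlogsig : Real.log (sig t) = t - Fl t := by
    rw [sig, Real.log_div (exp_pos t).ne' h1.ne', Real.log_exp, Fl]
  have hone : (1 : ℝ) - sig t = 1 / (1 + rexp t) := by
    rw [sig]; field_simp; ring
  have hlogone : Real.log (1 - sig t) = -Fl t := by
    rw [hone, one_div, Real.log_inv, Fl]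
  rw [binH, hlogsig, hlogone]; ring

lemma binH_add_le {β : ℝ} (hβ : β ∈ Set.Icc (0:ℝ) 1) (t : ℝ) :
    binH β + β * t ≤ Fl t := by
  obtain ⟨h0, h1⟩ := hβ
  rcases eq_or_lt_of_le h0 with h0' | h0'
  · simp [binH, ← h0', Fl]
    exact Real.log_nonneg (by have := (exp_pos t).le; linarith)
  rcases eq_or_lt_of_le h1 with h1' | h1'
  · subst h1'
    simp [binH, Fl]
    calc t = Real.log (rexp t) := (Real.log_exp t).symm
    _ ≤ Real.log (1 + rexp t) := Real.log_le_log (exp_pos t) (by linarith)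
  · have hconc := strictConcaveOn_log_Ioi.concaveOn
    have hu : rexp t / β ∈ Set.Ioi (0:ℝ) := div_pos (exp_pos t) h0'
    have hv : 1 / (1 - β) ∈ Set.Ioi (0:ℝ) := div_pos one_pos (by linarith : (0:ℝ) < 1 - β)
    have key := hconc.2 hu hv (le_of_lt h0') (by linarith : (0:ℝ) ≤ 1 - β) (by ring)
    have hsum : β • (rexp t / β) + (1 - β) • (1 / (1 - β)) = rexp t + 1 := by
      field_simp
      rw [smul_eq_mul, smul_eq_mul, mul_div_cancel₀ _ h0'.ne', mul_one_div_cancel (sub_pos.2 h1').ne']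
    rw [hsum] at key
    have hlu : Real.log (rexp t / β) = t - Real.log β := by
      rw [Real.log_div (exp_pos t).ne' h0'.ne', Real.log_exp]
    have hlv : Real.log (1 / (1 - β)) = -Real.log (1 - β) := by
      rw [one_div, Real.log_inv]
    simp only [smul_eq_mul, hlu, hlv] at key
    rw [binH, Fl]
    calc -(β * Real.log β) - (1 - β) * Real.log (1 - β) + β * t
        = β * (t - Real.log β) + (1 - β) * -Real.log (1 - β) := by ring
      _ ≤ Real.log (rexp t + 1) := key
      _ = Real.log (1 + rexp t) := by rw [add_comm]

lemma Fl_le (t : ℝ) : Fl t ≤ Real.log 2 + max t 0 := by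
  rcases le_total t 0 with h | h
  · have h2 : (1:ℝ) + rexp t ≤ 2 := by
      have := Real.exp_le_one_iff.2 h; linarith
    rw [Fl, max_eq_right h, add_zero]
    exact Real.log_le_log (one_add_exp_pos t) h2
  · rw [Fl, max_eq_left h]
    have h2 : (1:ℝ) + rexp t ≤ 2 * rexp t := by
      have := Real.one_le_exp h; linarith
    calc Real.log (1 + rexp t) ≤ Real.log (2 * rexp t) :=
          Real.log_le_log (one_add_exp_pos t) h2
      _ = Real.log 2 + t := by rw [Real.log_mul two_ne_zero (exp_pos t).ne', Real.log_exp]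

lemma Fl_convexOn : ConvexOn ℝ Set.univ Fl := by
  have hd : ∀ t : ℝ, deriv Fl t = sig t := fun t => (hasDerivAt_Fl t).deriv
  have hmono : Monotone (deriv Fl) := by
    intro a b hab
    rw [hd, hd, sig, sig]
    rw [div_le_div_iff₀ (one_add_exp_pos a) (one_add_exp_pos b)]
    have := Real.exp_le_exp.2 hab
    nlinarith [exp_pos a, exp_pos b]
  exact (hmono.monotoneOn _).convexOn_of_deriv convex_univ
    (fun t _ => (hasDerivAt_Fl t).continuousAt.continuousWithinAt)
    (fun t _ => (hasDerivAt_Fl t).differentiableAt.differentiableWithinAt)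

/-- Key derivative bound for minimizer argument. -/
lemma key_slope {t a c : ℝ} (h : ∀ s ∈ Set.Ioc (0:ℝ) 1, s * c ≤ Fl (t + s * a) - Fl t) :
    c ≤ sig t * a := by
  have h1 : HasDerivAt (fun s : ℝ => t + s * a) a 0 := by
    simpa using ((hasDerivAt_id (0:ℝ)).mul_const a).const_add t
  have hd : HasDerivAt (fun s : ℝ => Fl (t + s * a)) (sig t * a) 0 := by
    have := (hasDerivAt_Fl (t + 0 * a)).comp 0 h1
    simpa [Function.comp_def] using this
  have hslope := hasDerivAt_iff_tendsto_slope.1 hd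
  have hslope' : Tendsto (slope (fun s : ℝ => Fl (t + s * a)) 0) (𝓝[>] (0:ℝ))
      (𝓝 (sig t * a)) :=
    hslope.mono_left (nhdsWithin_mono 0 (fun s hs => ne_of_gt hs))
  refine ge_of_tendsto hslope' ?_
  have hmem : Set.Ioc (0:ℝ) 1 ∈ 𝓝[>] (0:ℝ) := Ioc_mem_nhdsGT_of_mem ⟨le_refl 0, one_pos⟩
  filter_upwards [hmem] with s hs
  rw [slope_def_field]
  rw [sub_zero, zero_mul, add_zero]
  rw [le_div_iff₀ hs.1]
  linarith [h s hs]

/-- A convex function on `[0,∞)` with limit `L` at `+∞` is bounded below by `L`. -/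
lemma ge_limit_of_convexOn {h : ℝ → ℝ} (hc : ConvexOn ℝ (Set.Ici 0) h) {L : ℝ}
    (hl : Tendsto h atTop (𝓝 L)) {γ : ℝ} (hγ : 0 ≤ γ) : L ≤ h γ := by
  by_contra hlt
  push_neg at hlt
  have hev1 : ∀ᶠ γ' in atTop, (h γ + L) / 2 < h γ' :=
    hl.eventually (eventually_gt_nhds (by linarith))
  obtain ⟨γ₁, hγ₁big, hγ₁⟩ := ((eventually_ge_atTop (γ + 1)).and hev1).exists
  have hγγ₁ : γ < γ₁ := by linarith
  set s := (h γ₁ - h γ) / (γ₁ - γ) with hs_def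
  have hs_pos : 0 < s := div_pos (by linarith) (by linarith)
  have hev2 : ∀ᶠ γ' in atTop, h γ' < L + 1 :=
    hl.eventually (eventually_lt_nhds (show L < L + 1 by linarith))
  obtain ⟨γ₂, hγ₂big, hγ₂⟩ :=
    ((eventually_ge_atTop (γ₁ + max ((L + 1 - h γ₁) / s) 0 + 1)).and hev2).exists
  have hγ₁γ₂ : γ₁ < γ₂ := by
    have : (0:ℝ) ≤ max ((L + 1 - h γ₁) / s) 0 := le_max_right _ _
    linarith
  have hslope := hc.slope_mono_adjacent hγ (le_trans hγ (by linarith)) hγγ₁ hγ₁γ₂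
  rw [← hs_def] at hslope
  have h2 : h γ₂ ≥ h γ₁ + s * (γ₂ - γ₁) := by
    rw [le_div_iff₀ (by linarith : (0:ℝ) < γ₂ - γ₁)] at hslope
    linarith
  have h3 : s * (γ₂ - γ₁) ≥ L + 1 - h γ₁ + s := by
    have h4 : γ₂ - γ₁ ≥ (L + 1 - h γ₁) / s + 1 := by
      have := le_max_left ((L + 1 - h γ₁) / s) 0
      linarith
    have := mul_le_mul_of_nonneg_left h4 hs_pos.le
    rw [mul_add, mul_div_cancel₀ _ hs_pos.ne'] at this
    linarith
  linarith

/-- If a convex function on `[0,∞)` (continuous on compacts) has no global minimum,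
it is antitone. -/
lemma antitoneOn_of_no_min {G : ℝ → ℝ} (hconv : ConvexOn ℝ (Set.Ici 0) G)
    (hcont : ∀ b : ℝ, 0 < b → ContinuousOn G (Set.Icc 0 b))
    (hnomin : ¬∃ γ₀ ∈ Set.Ici (0:ℝ), ∀ γ ∈ Set.Ici (0:ℝ), G γ₀ ≤ G γ) :
    AntitoneOn G (Set.Ici 0) := by
  intro a ha b hb hab
  by_contra hlt
  push_neg at hlt
  have hab' : a < b := lt_of_le_of_ne hab (by rintro rfl; exact absurd le_rfl hlt.not_ge)
  have hbpos : 0 < b := lt_of_le_of_lt ha hab'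
  obtain ⟨γ₀, hγ₀mem, hγ₀min⟩ :=
    isCompact_Icc.exists_isMinOn (Set.nonempty_Icc.2 hbpos.le) (hcont b hbpos)
  refine hnomin ⟨γ₀, hγ₀mem.1, fun γ hγ => ?_⟩
  rcases le_or_gt γ b with hγb | hγb
  · exact hγ₀min ⟨hγ, hγb⟩
  · have hslope := hconv.slope_mono_adjacent ha (le_trans hb hγb.le) hab' hγb
    have h1 : 0 < (G b - G a) / (b - a) := div_pos (by linarith) (by linarith)
    have h2 : 0 ≤ (G γ - G b) / (γ - b) := le_trans h1.le hslope
    have h3 : 0 ≤ G γ - G b := by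
      by_contra hneg
      push_neg at hneg
      have : (G γ - G b) / (γ - b) < 0 := div_neg_of_neg_of_pos (by linarith) (by linarith)
      linarith
    have hGb : G γ₀ ≤ G b := hγ₀min ⟨hb, le_refl b⟩
    linarith

lemma ereal_eq_bot {z : EReal} (h : ∀ c : ℝ, z ≤ (c : EReal)) : z = ⊥ := by
  induction z using EReal.rec with
  | bot => rfl
  | coe r =>
    have := h (r - 1)
    rw [EReal.coe_le_coe_iff] at this
    linarith
  | top => simpa using h 0


noncomputable def Mf (μ : Measure ℝ) (γ : ℝ) : ℝ := ∫ y, Real.exp (γ * y) ∂μ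

variable {μ : Measure ℝ} [IsProbabilityMeasure μ]

lemma Mf_zero : Mf μ 0 = 1 := by simp [Mf]

lemma Mf_int (hmgf : ∀ γ : ℝ, 0 < γ → Integrable (fun y => Real.exp (γ * y)) μ)
    {γ : ℝ} (hγ : 0 ≤ γ) : Integrable (fun y => Real.exp (γ * y)) μ := by
  rcases eq_or_lt_of_le hγ with h | h
  · simp only [← h, zero_mul, Real.exp_zero]
    exact integrable_const 1
  · exact hmgf γ h

lemma Mf_pos (hmgf : ∀ γ : ℝ, 0 < γ → Integrable (fun y => Real.exp (γ * y)) μ)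
    {γ : ℝ} (hγ : 0 ≤ γ) : 0 < Mf μ γ := by
  have := ProbabilityTheory.mgf_pos (X := id) (μ := μ) (t := γ)
    (by simpa using Mf_int hmgf hγ)
  simpa [ProbabilityTheory.mgf, Mf] using this

lemma Mf_nonneg (γ : ℝ) : 0 ≤ Mf μ γ :=
  integral_nonneg fun y => (exp_pos _).le

lemma lint_Mf (hmgf : ∀ γ : ℝ, 0 < γ → Integrable (fun y => Real.exp (γ * y)) μ)
    {γ : ℝ} (hγ : 0 ≤ γ) :
    (∫⁻ y, ENNReal.ofReal (Real.exp (γ * y)) ∂μ) = ENNReal.ofReal (Mf μ γ) :=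
  (ofReal_integral_eq_lintegral_ofReal (Mf_int hmgf hγ)
    (Eventually.of_forall fun y => (exp_pos _).le)).symm

lemma convexOn_log_Mf (hmgf : ∀ γ : ℝ, 0 < γ → Integrable (fun y => Real.exp (γ * y)) μ) :
    ConvexOn ℝ (Set.Ici (0:ℝ)) (fun γ => Real.log (Mf μ γ)) := by
  refine ⟨convex_Ici 0, ?_⟩
  intro γ₁ h₁ γ₂ h₂ a b ha hb hab
  rcases eq_or_lt_of_le ha with ha' | ha'
  · have hb1 : b = 1 := by linarith
    simp [← ha', hb1]
  rcases eq_or_lt_of_le hb with hb' | hb'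
  · have ha1 : a = 1 := by linarith
    simp [← hb', ha1]
  simp only [smul_eq_mul]
  have hγ₁ : (0:ℝ) ≤ γ₁ := h₁
  have hγ₂ : (0:ℝ) ≤ γ₂ := h₂
  have hγm : (0:ℝ) ≤ a * γ₁ + b * γ₂ := by positivity
  -- Hölder with p = 1/a, q = 1/b
  have hpq : (1/a : ℝ).HolderConjugate (1/b) := by
    constructor
    · simp only [one_div, inv_inv, inv_one]; exact hab
    · exact one_div_pos.2 ha'
    · exact one_div_pos.2 hb'
  set f : ℝ → ℝ≥0∞ := fun y => ENNReal.ofReal (Real.exp (a * γ₁ * y)) with hf_def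
  set g : ℝ → ℝ≥0∞ := fun y => ENNReal.ofReal (Real.exp (b * γ₂ * y)) with hg_def
  have hfm : AEMeasurable f μ :=
    ((measurable_const.mul measurable_id).exp.ennreal_ofReal).aemeasurable
  have hgm : AEMeasurable g μ :=
    ((measurable_const.mul measurable_id).exp.ennreal_ofReal).aemeasurable
  have key := ENNReal.lintegral_mul_le_Lp_mul_Lq μ hpq hfm hgm
  have hfg : ∀ y : ℝ, (f * g) y = ENNReal.ofReal (Real.exp ((a * γ₁ + b * γ₂) * y)) := by
    intro y
    simp only [Pi.mul_apply, hf_def, hg_def]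
    rw [← ENNReal.ofReal_mul (exp_pos _).le, ← Real.exp_add]
    ring_nf
  have hfp : ∀ y : ℝ, f y ^ (1/a : ℝ) = ENNReal.ofReal (Real.exp (γ₁ * y)) := by
    intro y
    show ENNReal.ofReal (Real.exp (a * γ₁ * y)) ^ (1/a : ℝ) = _
    rw [ENNReal.ofReal_rpow_of_pos (exp_pos _), ← Real.exp_mul]
    congr 1
    field_simp
  have hgq : ∀ y : ℝ, g y ^ (1/b : ℝ) = ENNReal.ofReal (Real.exp (γ₂ * y)) := by
    intro y
    show ENNReal.ofReal (Real.exp (b * γ₂ * y)) ^ (1/b : ℝ) = _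
    rw [ENNReal.ofReal_rpow_of_pos (exp_pos _), ← Real.exp_mul]
    congr 1
    field_simp
  simp only [hfg, hfp, hgq] at key
  rw [lint_Mf hmgf hγm, lint_Mf hmgf hγ₁, lint_Mf hmgf hγ₂] at key
  rw [one_div_one_div, one_div_one_div] at key
  -- convert to real inequality
  have hM1 := Mf_pos hmgf hγ₁
  have hM2 := Mf_pos hmgf hγ₂
  have hMm := Mf_pos hmgf hγm
  have key2 : Mf μ (a * γ₁ + b * γ₂) ≤ Mf μ γ₁ ^ a * Mf μ γ₂ ^ b := by
    have hne : (ENNReal.ofReal (Mf μ γ₁)) ^ (a:ℝ) * (ENNReal.ofReal (Mf μ γ₂)) ^ (b:ℝ) ≠ ⊤ :=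
      ENNReal.mul_ne_top (ENNReal.rpow_ne_top_of_nonneg ha ENNReal.ofReal_ne_top)
        (ENNReal.rpow_ne_top_of_nonneg hb ENNReal.ofReal_ne_top)
    have := ENNReal.toReal_mono hne key
    rwa [ENNReal.toReal_ofReal (Mf_nonneg _), ENNReal.toReal_mul,
      ← ENNReal.toReal_rpow, ← ENNReal.toReal_rpow,
      ENNReal.toReal_ofReal (Mf_nonneg _), ENNReal.toReal_ofReal (Mf_nonneg _)] at this
  calc Real.log (Mf μ (a * γ₁ + b * γ₂)) ≤ Real.log (Mf μ γ₁ ^ a * Mf μ γ₂ ^ b) :=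
        Real.log_le_log hMm key2
    _ = a * Real.log (Mf μ γ₁) + b * Real.log (Mf μ γ₂) := by
        rw [Real.log_mul (by positivity) (by positivity),
          Real.log_rpow hM1, Real.log_rpow hM2]



lemma Mf_tendsto_zero (hmgf : ∀ γ : ℝ, 0 < γ → Integrable (fun y => Real.exp (γ * y)) μ) :
    Tendsto (Mf μ) (𝓝[>] (0:ℝ)) (𝓝 1) := by
  have h1 : (1:ℝ) = ∫ y, (1:ℝ) ∂μ := by simp
  rw [h1]
  apply tendsto_integral_filter_of_dominated_convergence (fun y => 1 + Real.exp y)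
  · exact Eventually.of_forall fun γ =>
      ((measurable_const.mul measurable_id).exp).aestronglyMeasurable
  · have hmem : Set.Ioc (0:ℝ) 1 ∈ 𝓝[>] (0:ℝ) := Ioc_mem_nhdsGT_of_mem ⟨le_refl 0, one_pos⟩
    filter_upwards [hmem] with γ hγ
    refine Eventually.of_forall fun y => ?_
    rw [Real.norm_eq_abs, abs_of_pos (exp_pos _)]
    rcases le_total y 0 with hy | hy
    · have : γ * y ≤ 0 := mul_nonpos_iff.2 (Or.inl ⟨hγ.1.le, hy⟩)
      have := Real.exp_le_one_iff.2 this
      have := (exp_pos y).le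
      linarith
    · have : γ * y ≤ y := by nlinarith [hγ.1.le, hγ.2]
      have := Real.exp_le_exp.2 this
      linarith
  · exact (integrable_const 1).add (by simpa using hmgf 1 one_pos)
  · refine Eventually.of_forall fun y => ?_
    have : Tendsto (fun γ : ℝ => γ * y) (𝓝[>] (0:ℝ)) (𝓝 0) := by
      have h0 : Tendsto (fun γ : ℝ => γ * y) (𝓝 (0:ℝ)) (𝓝 (0 * y)) :=
        (continuous_id.mul (continuous_const (y := y))).tendsto (0:ℝ)
      rw [zero_mul] at h0
      exact h0.mono_left nhdsWithin_le_nhds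
    simpa [Function.comp_def] using (Real.continuous_exp.tendsto 0).comp this


noncomputable def Psi (μ : Measure ℝ) (K : ℝ) (γ : ℝ) : ℝ :=
  Real.log K + Real.log (Mf μ γ)

noncomputable def Gf (μ : Measure ℝ) (K x : ℝ) (γ : ℝ) : ℝ := Fl (Psi μ K γ) - x * γ

noncomputable def fb (μ : Measure ℝ) (K x : ℝ) (β γ : ℝ) : ℝ :=
  binH β + β * Real.log K + β * Real.log (Mf μ γ) - x * γ

variable {K x : ℝ}

lemma exp_Psi (hmgf : ∀ γ : ℝ, 0 < γ → Integrable (fun y => Real.exp (γ * y)) μ)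
    (hK : 0 < K) {γ : ℝ} (hγ : 0 ≤ γ) : rexp (Psi μ K γ) = K * Mf μ γ := by
  rw [Psi, Real.exp_add, Real.exp_log hK, Real.exp_log (Mf_pos hmgf hγ)]

lemma Gf_eq (hmgf : ∀ γ : ℝ, 0 < γ → Integrable (fun y => Real.exp (γ * y)) μ)
    (hK : 0 < K) {γ : ℝ} (hγ : 0 ≤ γ) :
    Gf μ K x γ = Real.log (1 + K * Mf μ γ) - x * γ := by
  rw [Gf, Fl, exp_Psi hmgf hK hγ]

lemma fb_eq (β γ : ℝ) : fb μ K x β γ = binH β + β * Psi μ K γ - x * γ := by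
  rw [fb, Psi]; ring

lemma fb_le_Gf (hmgf : ∀ γ : ℝ, 0 < γ → Integrable (fun y => Real.exp (γ * y)) μ)
    {β : ℝ} (hβ : β ∈ Set.Icc (0:ℝ) 1) {γ : ℝ} (hγ : 0 ≤ γ) :
    fb μ K x β γ ≤ Gf μ K x γ := by
  rw [fb_eq, Gf]
  have := binH_add_le hβ (Psi μ K γ)
  linarith

lemma Psi_convex (hmgf : ∀ γ : ℝ, 0 < γ → Integrable (fun y => Real.exp (γ * y)) μ) :
    ConvexOn ℝ (Set.Ici 0) (Psi μ K) := by
  have h := (convexOn_const (Real.log K) (convex_Ici (0:ℝ))).add (convexOn_log_Mf hmgf)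
  exact h

lemma Gf_convex (hmgf : ∀ γ : ℝ, 0 < γ → Integrable (fun y => Real.exp (γ * y)) μ) :
    ConvexOn ℝ (Set.Ici 0) (Gf μ K x) := by
  refine ⟨convex_Ici 0, ?_⟩
  intro u hu v hv a b ha hb hab
  simp only [smul_eq_mul, Gf]
  have h1 : Psi μ K (a * u + b * v) ≤ a * Psi μ K u + b * Psi μ K v := by
    have := (Psi_convex (K := K) hmgf).2 hu hv ha hb hab
    simpa using this
  have h2 : Fl (Psi μ K (a * u + b * v)) ≤ Fl (a * Psi μ K u + b * Psi μ K v) :=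
    Fl_mono h1
  have h3 : Fl (a * Psi μ K u + b * Psi μ K v) ≤ a * Fl (Psi μ K u) + b * Fl (Psi μ K v) := by
    have := Fl_convexOn.2 (Set.mem_univ (Psi μ K u)) (Set.mem_univ (Psi μ K v)) ha hb hab
    simpa using this
  nlinarith [h2, h3]

lemma f1_convex (hmgf : ∀ γ : ℝ, 0 < γ → Integrable (fun y => Real.exp (γ * y)) μ) :
    ConvexOn ℝ (Set.Ici 0) (fun γ => Psi μ K γ - x * γ) := by
  refine ⟨convex_Ici 0, ?_⟩
  intro u hu v hv a b ha hb hab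
  simp only [smul_eq_mul]
  have h1 : Psi μ K (a * u + b * v) ≤ a * Psi μ K u + b * Psi μ K v := by
    have := (Psi_convex (K := K) hmgf).2 hu hv ha hb hab
    simpa using this
  nlinarith [h1]

lemma Gf_tendsto_zero (hmgf : ∀ γ : ℝ, 0 < γ → Integrable (fun y => Real.exp (γ * y)) μ) :
    Tendsto (Gf μ K x) (𝓝[>] (0:ℝ)) (𝓝 (Gf μ K x 0)) := by
  have hPsi : Tendsto (Psi μ K) (𝓝[>] (0:ℝ)) (𝓝 (Real.log K + Real.log 1)) := by
    refine Tendsto.const_add _ ?_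
    exact ((Real.continuousAt_log one_ne_zero).tendsto).comp (Mf_tendsto_zero hmgf)
  have hFl : Tendsto (fun γ => Fl (Psi μ K γ)) (𝓝[>] (0:ℝ))
      (𝓝 (Fl (Real.log K + Real.log 1))) :=
    (continuous_Fl.tendsto _).comp hPsi
  have hlin : Tendsto (fun γ : ℝ => x * γ) (𝓝[>] (0:ℝ)) (𝓝 (x * 0)) :=
    ((continuous_const.mul continuous_id).tendsto 0).mono_left nhdsWithin_le_nhds
  have := hFl.sub hlin
  have heq : Fl (Real.log K + Real.log 1) - x * 0 = Gf μ K x 0 := by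
    rw [Gf, Psi, Mf_zero]
  rwa [heq] at this

lemma Gf_contOn (hmgf : ∀ γ : ℝ, 0 < γ → Integrable (fun y => Real.exp (γ * y)) μ)
    (b : ℝ) (hb : 0 < b) : ContinuousOn (Gf μ K x) (Set.Icc 0 b) := by
  have hlog : ContinuousOn (fun γ => Real.log (Mf μ γ)) (Set.Ioi (0:ℝ)) :=
    (((convexOn_log_Mf hmgf).subset Set.Ioi_subset_Ici_self (convex_Ioi 0))).continuousOn
      isOpen_Ioi
  have hIoi : ContinuousOn (Gf μ K x) (Set.Ioi (0:ℝ)) := by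
    have hPsiC : ContinuousOn (Psi μ K) (Set.Ioi (0:ℝ)) := continuousOn_const.add hlog
    exact (continuous_Fl.comp_continuousOn hPsiC).sub
      (continuous_const.mul continuous_id).continuousOn
  intro z hz
  rcases eq_or_lt_of_le hz.1 with hz0 | hz0
  · rw [← hz0]
    have hsub : Set.Icc (0:ℝ) b ⊆ insert 0 (Set.Ioi 0) := by
      intro w hw
      rcases eq_or_lt_of_le hw.1 with h | h
      · exact Or.inl h.symm
      · exact Or.inr h
    refine (ContinuousWithinAt.mono ?_ hsub)
    rw [ContinuousWithinAt, nhdsWithin_insert]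
    exact tendsto_sup.2 ⟨tendsto_pure_nhds _ _, Gf_tendsto_zero hmgf⟩
  · exact (hIoi.continuousAt (Ioi_mem_nhds hz0)).continuousWithinAt

end SupInfAux

open SupInfAux


/-- minimax identity; with `M(γ) = ∫ e^{γ y} dμ(y)` finite for `γ > 0`,
`sup_{β ∈ [0,1]} inf_{γ > 0} [H(β) + β log K + β log M(γ) − xγ]
  = inf_{γ > 0} [log(1 + K M(γ)) − xγ]`,
values taken in the extended reals `[−∞, +∞]`. (For `β ∈ (0,1]` the inner infimum
equals `H(β) + β log K − β I(x/β)` where `I` is the rate function of `μ`.) -/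
theorem sup_inf_eq_inf_log (μ : Measure ℝ) [IsProbabilityMeasure μ]
    (hmgf : ∀ γ : ℝ, 0 < γ → Integrable (fun y => Real.exp (γ * y)) μ)
    (K x : ℝ) (hK : 0 < K) (hx : 0 < x) :
    (⨆ β : Set.Icc (0 : ℝ) 1, ⨅ γ : {g : ℝ // 0 < g},
        ((binH β + (β : ℝ) * Real.log K +
          (β : ℝ) * Real.log (∫ y, Real.exp ((γ : ℝ) * y) ∂μ) - x * γ : ℝ) : EReal)) =
      ⨅ γ : {g : ℝ // 0 < g},
        ((Real.log (1 + K * ∫ y, Real.exp ((γ : ℝ) * y) ∂μ) - x * γ : ℝ) : EReal) := by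
  show (⨆ β : Set.Icc (0:ℝ) 1, ⨅ γ : {g : ℝ // 0 < g},
      ((fb μ K x ↑β ↑γ : ℝ) : EReal))
    = ⨅ γ : {g : ℝ // 0 < g}, ((Real.log (1 + K * Mf μ ↑γ) - x * ↑γ : ℝ) : EReal)
  have hR : (⨅ γ : {g : ℝ // 0 < g}, ((Real.log (1 + K * Mf μ ↑γ) - x * ↑γ : ℝ) : EReal))
      = ⨅ γ : {g : ℝ // 0 < g}, ((Gf μ K x ↑γ : ℝ) : EReal) :=
    iInf_congr fun γ => congrArg _ ((Gf_eq hmgf hK γ.2.le).symm)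
  rw [hR]
  apply le_antisymm
  · exact iSup_le fun β => le_iInf fun γ => iInf_le_of_le γ
      (EReal.coe_le_coe_iff.2 (fb_le_Gf hmgf β.2 γ.2.le))
  · set z := ⨅ γ : {g : ℝ // 0 < g}, ((Gf μ K x ↑γ : ℝ) : EReal) with hz
    by_cases hbdd : ∃ c : ℝ, ∀ γ : {g : ℝ // 0 < g}, c ≤ Gf μ K x ↑γ
    swap
    · push_neg at hbdd
      have hzbot : z = ⊥ := by
        apply ereal_eq_bot
        intro c
        obtain ⟨γ, hγ⟩ := hbdd c
        exact le_trans (iInf_le _ γ) (EReal.coe_le_coe_iff.2 hγ.le)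
      rw [hzbot]; exact bot_le
    obtain ⟨c, hc⟩ := hbdd
    suffices h : ∃ β : Set.Icc (0:ℝ) 1,
        z ≤ ⨅ γ : {g : ℝ // 0 < g}, ((fb μ K x ↑β ↑γ : ℝ) : EReal) by
      obtain ⟨β, hβ⟩ := h
      exact hβ.trans (le_iSup (fun β : Set.Icc (0:ℝ) 1 =>
        ⨅ γ : {g : ℝ // 0 < g}, ((fb μ K x ↑β ↑γ : ℝ) : EReal)) β)
    by_cases hmin : ∃ γ₀ ∈ Set.Ici (0:ℝ), ∀ γ ∈ Set.Ici (0:ℝ), Gf μ K x γ₀ ≤ Gf μ K x γ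
    · -- Case: the infimum over [0,∞) is attained at γs.
      obtain ⟨γs, hγs0, hγsmin⟩ := hmin
      set t := Psi μ K γs with ht
      have hβmem : sig t ∈ Set.Icc (0:ℝ) 1 := ⟨(sig_mem t).1.le, (sig_mem t).2.le⟩
      refine ⟨⟨sig t, hβmem⟩, ?_⟩
      have key : ∀ γ ∈ Set.Ici (0:ℝ), x * (γ - γs) ≤ sig t * (Psi μ K γ - t) := by
        intro γ hγ
        apply key_slope
        intro s hs
        have hγscomb : (1 - s) * γs + s * γ ∈ Set.Ici (0:ℝ) := by
          have h0γs : (0:ℝ) ≤ γs := hγs0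
          have h0γ : (0:ℝ) ≤ γ := hγ
          have : (0:ℝ) ≤ (1-s) * γs + s * γ := by nlinarith [hs.1.le, hs.2]
          exact this
        have hPsiconv : Psi μ K ((1-s) * γs + s * γ) ≤ (1-s) * t + s * Psi μ K γ := by
          have := (Psi_convex (K := K) hmgf).2 hγs0 hγ
            (by linarith [hs.2] : (0:ℝ) ≤ 1 - s) hs.1.le (by ring)
          simpa [ht] using this
        have hminapp := hγsmin _ hγscomb
        rw [Gf, Gf, ← ht] at hminapp
        have hFlmono : Fl (Psi μ K ((1-s)*γs + s*γ)) ≤ Fl (t + s * (Psi μ K γ - t)) := by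
          apply Fl_mono; linarith [hPsiconv]
        calc s * (x * (γ - γs)) = x * ((1-s)*γs + s*γ) - x * γs := by ring
          _ ≤ Fl (Psi μ K ((1-s)*γs + s*γ)) - Fl t := by linarith [hminapp]
          _ ≤ Fl (t + s * (Psi μ K γ - t)) - Fl t := by linarith [hFlmono]
      have hfbge : ∀ γ : {g : ℝ // 0 < g}, Gf μ K x γs ≤ fb μ K x (sig t) ↑γ := by
        intro γ
        have hkey := key ↑γ γ.2.le
        have hsig := binH_sig_add t
        rw [fb_eq, Gf, ← ht]
        have h2 : sig t * (Psi μ K ↑γ - t) = sig t * Psi μ K ↑γ - sig t * t := by ring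
        linarith [hkey, hsig, h2]
      have hzle : z ≤ ((Gf μ K x γs : ℝ) : EReal) := by
        rcases eq_or_lt_of_le (Set.mem_Ici.1 hγs0) with h0 | h0
        · have htd : Tendsto (fun γ : ℝ => ((Gf μ K x γ : ℝ) : EReal)) (𝓝[>] (0:ℝ))
              (𝓝 ((Gf μ K x 0 : ℝ) : EReal)) :=
            (continuous_coe_real_ereal.tendsto _).comp (Gf_tendsto_zero hmgf)
          have hev : ∀ᶠ γ in 𝓝[>] (0:ℝ), z ≤ ((Gf μ K x γ : ℝ) : EReal) := by
            filter_upwards [self_mem_nhdsWithin] with γ hγ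
            exact iInf_le _ (⟨γ, hγ⟩ : {g : ℝ // 0 < g})
          have hres := ge_of_tendsto htd hev
          rw [← h0]
          exact hres
        · exact iInf_le _ (⟨γs, h0⟩ : {g : ℝ // 0 < g})
      exact hzle.trans (le_iInf fun γ => EReal.coe_le_coe_iff.2 (hfbge γ))
    · -- Case: no minimum; G is antitone and tends to its infimum at +∞.
      have hant := antitoneOn_of_no_min (Gf_convex hmgf) (Gf_contOn hmgf) hmin
      set G' : ℝ → ℝ := fun γ => Gf μ K x (max γ 0) with hG'
      have hant' : Antitone G' := fun u v huv =>
        hant (le_max_right u 0) (le_max_right v 0) (max_le_max huv le_rfl)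
      have hbdd' : BddBelow (Set.range G') := by
        refine ⟨min c (Gf μ K x 0), ?_⟩
        rintro w ⟨γ, rfl⟩
        rcases le_or_gt γ 0 with h | h
        · show min c (Gf μ K x 0) ≤ Gf μ K x (max γ 0)
          rw [max_eq_right h]
          exact min_le_right _ _
        · show min c (Gf μ K x 0) ≤ Gf μ K x (max γ 0)
          rw [max_eq_left h.le]
          exact le_trans (min_le_left _ _) (hc ⟨γ, h⟩)
      set L := ⨅ γ : ℝ, G' γ with hL
      have hT : Tendsto G' atTop (𝓝 L) := tendsto_atTop_ciInf hant' hbdd'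
      have hTG : Tendsto (Gf μ K x) atTop (𝓝 L) := by
        apply hT.congr'
        filter_upwards [eventually_ge_atTop (0:ℝ)] with γ hγ
        show Gf μ K x (max γ 0) = Gf μ K x γ
        rw [max_eq_left hγ]
      have hLle : ∀ γ : ℝ, 0 ≤ γ → L ≤ Gf μ K x γ := by
        intro γ hγ
        have h := ciInf_le hbdd' γ
        rw [hG'] at h
        simpa [max_eq_left hγ] using h
      -- Psi tends to +∞
      have hPsige : ∀ γ : ℝ, 0 ≤ γ → L + x * γ - Real.log 2 ≤ max (Psi μ K γ) 0 := by
        intro γ hγ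
        have h1 := hLle γ hγ
        rw [Gf] at h1
        have h2 := Fl_le (Psi μ K γ)
        linarith
      have hPsiT : Tendsto (Psi μ K) atTop atTop := by
        have hlin : Tendsto (fun γ : ℝ => L - Real.log 2 + x * γ) atTop atTop :=
          tendsto_atTop_add_const_left _ _ (Tendsto.const_mul_atTop hx tendsto_id)
        apply tendsto_atTop_mono' _ _ hlin
        have hev : ∀ᶠ γ : ℝ in atTop, 1 ≤ L - Real.log 2 + x * γ := by
          have := hlin.eventually_ge_atTop (1:ℝ)
          exact this
        filter_upwards [hev, eventually_ge_atTop (0:ℝ)] with γ h1 hγ0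
        have h3 := hPsige γ hγ0
        rcases max_cases (Psi μ K γ) 0 with ⟨heq, _⟩ | ⟨heq, _⟩
        · rw [heq] at h3; linarith
        · rw [heq] at h3; linarith
      have hdelta : Tendsto (fun γ => Real.log (1 + rexp (-Psi μ K γ))) atTop (𝓝 0) := by
        have h1 : Tendsto (fun γ => -Psi μ K γ) atTop atBot :=
          tendsto_neg_atTop_atBot.comp hPsiT
        have h2 : Tendsto (fun γ => rexp (-Psi μ K γ)) atTop (𝓝 0) :=
          Real.tendsto_exp_atBot.comp h1
        have h3 : Tendsto (fun γ => 1 + rexp (-Psi μ K γ)) atTop (𝓝 1) := by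
          have := tendsto_const_nhds.add h2 (f := fun _ : ℝ => (1:ℝ))
          simpa using this
        have h4 := ((Real.continuousAt_log (by norm_num : (1:ℝ) ≠ 0)).tendsto).comp h3
        simpa [Function.comp_def] using h4
      have hf1T : Tendsto (fun γ => Psi μ K γ - x * γ) atTop (𝓝 L) := by
        have := hTG.sub hdelta
        rw [sub_zero] at this
        apply this.congr'
        filter_upwards [eventually_ge_atTop (0:ℝ)] with γ hγ
        rw [Gf, Fl_split]
        ring
      have hf1ge : ∀ γ : ℝ, 0 ≤ γ → L ≤ Psi μ K γ - x * γ := fun γ hγ =>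
        ge_limit_of_convexOn (f1_convex hmgf) hf1T hγ
      have hfbge : ∀ γ : {g : ℝ // 0 < g}, L ≤ fb μ K x 1 ↑γ := by
        intro γ
        rw [fb_eq, binH_one]
        have := hf1ge ↑γ γ.2.le
        linarith
      have hzL : z ≤ (L : EReal) := by
        have htd : Tendsto (fun γ : ℝ => ((Gf μ K x γ : ℝ) : EReal)) atTop (𝓝 (L : EReal)) :=
          (continuous_coe_real_ereal.tendsto _).comp hTG
        refine ge_of_tendsto htd ?_
        filter_upwards [eventually_gt_atTop (0:ℝ)] with γ hγ
        exact iInf_le _ (⟨γ, hγ⟩ : {g : ℝ // 0 < g})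
      exact ⟨⟨1, by norm_num⟩, hzL.trans (le_iInf fun γ => EReal.coe_le_coe_iff.2 (hfbge γ))⟩
end

section
/- (Efron–Stein inequality.) Let n ≥ 1, let μ₁,…,μ_n be probability measures on ℝ, let μ = μ₁ ⊗ … ⊗ μ_n be their product on ℝ^n, and let f : ℝ^n → ℝ be measurable and square-integrable with respect to μ. On the product space ℝ^n × ℝ^n with measure μ ⊗ μ, write ω = (X, X′), Z(ω) = f(X), and for each q ∈ {1,…,n} let Z_q′(ω) = f(X with its q-th coordinate replaced by X′_q). Then Var(Z) ≤ ∑_{q=1}^{n} E[ (max(0, Z − Z_q′))² ], where Var and E are taken with respect to μ ⊗ μ. -/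
open MeasureTheory

namespace EfronSteinAux

variable {n : ℕ}

/-- swap the coordinates in `p` between the two halves -/
def swapFun (p : Fin n → Prop) [DecidablePred p] (ω : (Fin n → ℝ) × (Fin n → ℝ)) :
    (Fin n → ℝ) × (Fin n → ℝ) :=
  (fun i => if p i then ω.2 i else ω.1 i, fun i => if p i then ω.1 i else ω.2 i)

lemma swapFun_involutive (p : Fin n → Prop) [DecidablePred p] :
    Function.Involutive (swapFun (n := n) p) := by
  intro ω
  unfold swapFun
  ext i <;> simp only <;> by_cases h : p i <;> simp [h]

lemma measurable_swapFun (p : Fin n → Prop) [DecidablePred p] :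
    Measurable (swapFun (n := n) p) := by
  refine Measurable.prod ?_ ?_ <;>
  · refine measurable_pi_lambda _ fun i => ?_
    by_cases h : p i <;> simp only [swapFun, h, if_true, if_false] <;>
      exact (measurable_pi_apply i).comp (by measurability)

/-- the swap as a measurable equiv -/
def swapEquiv (p : Fin n → Prop) [DecidablePred p] :
    ((Fin n → ℝ) × (Fin n → ℝ)) ≃ᵐ ((Fin n → ℝ) × (Fin n → ℝ)) where
  toFun := swapFun p
  invFun := swapFun p
  left_inv := swapFun_involutive p
  right_inv := swapFun_involutive p
  measurable_toFun := measurable_swapFun p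
  measurable_invFun := measurable_swapFun p

variable (μs : Fin n → Measure ℝ) [∀ q, IsProbabilityMeasure (μs q)]

lemma measurePreserving_swapFun (p : Fin n → Prop) [DecidablePred p] :
    MeasurePreserving (swapFun (n := n) p)
      ((Measure.pi μs).prod (Measure.pi μs)) ((Measure.pi μs).prod (Measure.pi μs)) := by
  classical
  set κ : (Fin n ⊕ Fin n) → Measure ℝ := Sum.elim μs μs with hκ
  haveI : ∀ i, IsProbabilityMeasure (κ i) := by rintro (i | i) <;> simp [hκ] <;> infer_instance
  have hE : MeasurePreserving (MeasurableEquiv.sumPiEquivProdPi (fun _ : Fin n ⊕ Fin n => ℝ))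
      (Measure.pi κ) ((Measure.pi μs).prod (Measure.pi μs)) :=
    MeasureTheory.measurePreserving_sumPiEquivProdPi κ
  set e : (Fin n ⊕ Fin n) ≃ (Fin n ⊕ Fin n) :=
    { toFun := Sum.elim (fun i => if p i then .inr i else .inl i)
        (fun i => if p i then .inl i else .inr i)
      invFun := Sum.elim (fun i => if p i then .inr i else .inl i)
        (fun i => if p i then .inl i else .inr i)
      left_inv := by rintro (i | i) <;> by_cases h : p i <;> simp [h]
      right_inv := by rintro (i | i) <;> by_cases h : p i <;> simp [h] } with he
  have hperm : MeasurePreserving (MeasurableEquiv.piCongrLeft (fun _ : Fin n ⊕ Fin n => ℝ) e)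
      (Measure.pi κ) (Measure.pi κ) := by
    have : (fun i => κ (e i)) = κ := by
      funext i
      rcases i with i | i <;> by_cases h : p i <;> simp [he, hκ, h]
    have h2 := MeasureTheory.measurePreserving_piCongrLeft κ e
    rwa [this] at h2
  have hcomp := hE.comp (hperm.comp hE.symm)
  have heq : (MeasurableEquiv.sumPiEquivProdPi (fun _ : Fin n ⊕ Fin n => ℝ)) ∘
      (MeasurableEquiv.piCongrLeft (fun _ : Fin n ⊕ Fin n => ℝ) e) ∘
      (MeasurableEquiv.sumPiEquivProdPi (fun _ : Fin n ⊕ Fin n => ℝ)).symm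
      = swapFun p := by
    funext ω
    have key : ∀ (g : (Fin n ⊕ Fin n) → ℝ) (b : Fin n ⊕ Fin n),
        (MeasurableEquiv.piCongrLeft (fun _ : Fin n ⊕ Fin n => ℝ) e) g b = g (e b) := by
      intro g b
      have hb : b = e (e b) := by
        rcases b with i | i <;> by_cases h : p i <;> simp [he, h]
      conv_lhs => rw [hb]
      rw [MeasurableEquiv.coe_piCongrLeft]
      exact Equiv.piCongrLeft_apply_apply (P := fun _ => ℝ) e g (e b)
    simp only [Function.comp_apply]
    ext i <;>
    · simp only [MeasurableEquiv.coe_sumPiEquivProdPi, MeasurableEquiv.coe_sumPiEquivProdPi_symm,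
        Equiv.sumPiEquivProdPi_apply, key, swapFun]
      by_cases h : p i <;> simp [he, h, Equiv.sumPiEquivProdPi_symm_apply]
  rwa [heq] at hcomp

lemma integral_comp_swap (p : Fin n → Prop) [DecidablePred p]
    (h : ((Fin n → ℝ) × (Fin n → ℝ)) → ℝ) :
    ∫ ω, h (swapFun p ω) ∂((Measure.pi μs).prod (Measure.pi μs))
      = ∫ ω, h ω ∂((Measure.pi μs).prod (Measure.pi μs)) :=
  (measurePreserving_swapFun μs p).integral_comp (swapEquiv p).measurableEmbedding h

variable {μs}

/-- the mixed vector: first `k` coordinates from `ω.1`, the rest from `ω.2`. -/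
def mixFun (k : ℕ) (ω : (Fin n → ℝ) × (Fin n → ℝ)) : Fin n → ℝ :=
  fun i => if (i : ℕ) < k then ω.1 i else ω.2 i

lemma mix_eq_fst_swap (k : ℕ) (ω : (Fin n → ℝ) × (Fin n → ℝ)) :
    mixFun k ω = (swapFun (fun i : Fin n => ¬((i : ℕ) < k)) ω).1 := by
  funext i
  simp only [mixFun, swapFun, Nat.not_lt]
  by_cases h : (i : ℕ) < k
  · rw [if_pos h, if_neg (by omega)]
  · rw [if_neg h, if_pos (by omega)]

lemma mix_n (ω : (Fin n → ℝ) × (Fin n → ℝ)) : mixFun n ω = ω.1 := by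
  funext i; simp [mixFun, i.isLt]

lemma mix_zero (ω : (Fin n → ℝ) × (Fin n → ℝ)) : mixFun 0 ω = ω.2 := by
  funext i; simp [mixFun]

lemma fst_swapEq (q : Fin n) (ω : (Fin n → ℝ) × (Fin n → ℝ)) :
    (swapFun (· = q) ω).1 = Function.update ω.1 q (ω.2 q) := by
  funext i
  rw [Function.update_apply]
  by_cases h : i = q
  · subst h; simp [swapFun]
  · simp [swapFun, h]

lemma snd_swapEq (q : Fin n) (ω : (Fin n → ℝ) × (Fin n → ℝ)) :
    (swapFun (· = q) ω).2 = Function.update ω.2 q (ω.1 q) := by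
  funext i
  rw [Function.update_apply]
  by_cases h : i = q
  · subst h; simp [swapFun]
  · simp [swapFun, h]

lemma update_swapEq (q : Fin n) (ω : (Fin n → ℝ) × (Fin n → ℝ)) :
    Function.update (swapFun (· = q) ω).1 q ((swapFun (· = q) ω).2 q) = ω.1 := by
  rw [fst_swapEq, snd_swapEq]
  simp [Function.update_idem]

lemma mix_swapEq1 (q : Fin n) (ω : (Fin n → ℝ) × (Fin n → ℝ)) :
    mixFun ((q : ℕ) + 1) (swapFun (· = q) ω) = mixFun q ω := by
  funext i
  by_cases h : i = q
  · subst h; simp [mixFun, swapFun]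
  · have h' : (i : ℕ) ≠ (q : ℕ) := fun hc => h (Fin.ext hc)
    simp only [mixFun, swapFun, if_neg h]
    split_ifs with h1 h2 <;> first | rfl | omega

lemma mix_swapEq2 (q : Fin n) (ω : (Fin n → ℝ) × (Fin n → ℝ)) :
    mixFun q (swapFun (· = q) ω) = mixFun ((q : ℕ) + 1) ω := by
  funext i
  by_cases h : i = q
  · subst h; simp [mixFun, swapFun]
  · have h' : (i : ℕ) ≠ (q : ℕ) := fun hc => h (Fin.ext hc)
    simp only [mixFun, swapFun, if_neg h]
    split_ifs with h1 h2 <;> first | rfl | omega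

lemma update_mix (q : Fin n) (ω : (Fin n → ℝ) × (Fin n → ℝ)) :
    Function.update (mixFun q ω) q (ω.1 q) = mixFun ((q : ℕ) + 1) ω := by
  funext i
  rw [Function.update_apply]
  by_cases h : i = q
  · subst h; simp [mixFun]
  · have h' : (i : ℕ) ≠ (q : ℕ) := fun hc => h (Fin.ext hc)
    simp only [mixFun, if_neg h]
    split_ifs with h1 h2 <;> first | rfl | omega

lemma snd_swapLt (q : Fin n) (ω : (Fin n → ℝ) × (Fin n → ℝ)) :
    (swapFun (fun i : Fin n => ¬((i : ℕ) < (q : ℕ))) ω).2 q = ω.1 q := by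
  simp [swapFun]

lemma memLp_max_zero {α : Type*} [MeasurableSpace α] {P : Measure α} {g : α → ℝ}
    (hg : MemLp g 2 P) : MemLp (fun ω => max 0 (g ω)) 2 P := by
  refine MemLp.of_le hg (aestronglyMeasurable_const.sup hg.aestronglyMeasurable) ?_
  refine Filter.Eventually.of_forall fun ω => ?_
  simp only [Real.norm_eq_abs]
  rcases le_total 0 (g ω) with h | h
  · rw [max_eq_right h]
  · simp [max_eq_left h]

end EfronSteinAux

open EfronSteinAux

/-- Efron–Stein inequality: for independent coordinates
`X = (X₁, …, X_n)` with laws `μ₁, …, μ_n` and an independent copy `X′`, and a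
square-integrable `Z = f(X)`,
`Var(Z) ≤ ∑_q E[(max(0, Z − Z_q′))²]` where `Z_q′ = f(X` with the `q`-th coordinate
replaced by `X′_q)`. -/
theorem efron_stein (n : ℕ) (hn : 1 ≤ n) (μs : Fin n → Measure ℝ)
    [∀ q, IsProbabilityMeasure (μs q)] (f : (Fin n → ℝ) → ℝ)
    (hmeas : Measurable f) (hL2 : MemLp f 2 (Measure.pi μs)) :
    ProbabilityTheory.variance (fun ω : (Fin n → ℝ) × (Fin n → ℝ) => f ω.1)
        ((Measure.pi μs).prod (Measure.pi μs)) ≤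
      ∑ q : Fin n, ∫ ω, (max 0 (f ω.1 - f (Function.update ω.1 q (ω.2 q)))) ^ 2
        ∂((Measure.pi μs).prod (Measure.pi μs)) := by
  classical
  -- measure preserving maps
  have mpFst : MeasurePreserving Prod.fst ((Measure.pi μs).prod (Measure.pi μs)) (Measure.pi μs) :=
    ⟨measurable_fst, by simp [Measure.map_fst_prod]⟩
  have mpSnd : MeasurePreserving Prod.snd ((Measure.pi μs).prod (Measure.pi μs)) (Measure.pi μs) :=
    ⟨measurable_snd, by simp [Measure.map_snd_prod]⟩
  have mpMix : ∀ k : ℕ, MeasurePreserving (fun ω => mixFun k ω) ((Measure.pi μs).prod (Measure.pi μs)) (Measure.pi μs) := by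
    intro k
    have h1 := mpFst.comp (measurePreserving_swapFun μs (fun i : Fin n => ¬((i : ℕ) < k)))
    have h2 : (Prod.fst ∘ swapFun fun i : Fin n => ¬((i : ℕ) < k))
        = fun ω : (Fin n → ℝ) × (Fin n → ℝ) => mixFun k ω := by
      funext ω; exact (mix_eq_fst_swap k ω).symm
    rwa [h2] at h1
  have mpXq : ∀ q : Fin n, MeasurePreserving
      (fun ω : (Fin n → ℝ) × (Fin n → ℝ) => Function.update ω.1 q (ω.2 q)) ((Measure.pi μs).prod (Measure.pi μs)) (Measure.pi μs) :=
    by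
    intro q
    have h1 := mpFst.comp (measurePreserving_swapFun μs (· = q))
    have h2 : (Prod.fst ∘ swapFun (· = q))
        = fun ω : (Fin n → ℝ) × (Fin n → ℝ) => Function.update ω.1 q (ω.2 q) := by
      funext ω; exact fst_swapEq q ω
    rwa [h2] at h1
  have mpYq : ∀ q : Fin n, MeasurePreserving
      (fun ω : (Fin n → ℝ) × (Fin n → ℝ) => Function.update ω.2 q (ω.1 q)) ((Measure.pi μs).prod (Measure.pi μs)) (Measure.pi μs) :=
    by
    intro q
    have h1 := mpSnd.comp (measurePreserving_swapFun μs (· = q))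
    have h2 : (Prod.snd ∘ swapFun (· = q))
        = fun ω : (Fin n → ℝ) × (Fin n → ℝ) => Function.update ω.2 q (ω.1 q) := by
      funext ω; exact snd_swapEq q ω
    rwa [h2] at h1
  -- square integrability
  have hFx : MemLp (fun ω : (Fin n → ℝ) × (Fin n → ℝ) => f ω.1) 2 ((Measure.pi μs).prod (Measure.pi μs)) :=
    hL2.comp_measurePreserving mpFst
  have hFy : MemLp (fun ω : (Fin n → ℝ) × (Fin n → ℝ) => f ω.2) 2 ((Measure.pi μs).prod (Measure.pi μs)) :=
    hL2.comp_measurePreserving mpSnd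
  have hH : ∀ k : ℕ, MemLp (fun ω => f (mixFun k ω)) 2 ((Measure.pi μs).prod (Measure.pi μs)) :=
    fun k => hL2.comp_measurePreserving (mpMix k)
  have hFxq : ∀ q : Fin n,
      MemLp (fun ω : (Fin n → ℝ) × (Fin n → ℝ) => f (Function.update ω.1 q (ω.2 q))) 2 ((Measure.pi μs).prod (Measure.pi μs)) :=
    fun q => hL2.comp_measurePreserving (mpXq q)
  have hFyq : ∀ q : Fin n,
      MemLp (fun ω : (Fin n → ℝ) × (Fin n → ℝ) => f (Function.update ω.2 q (ω.1 q))) 2 ((Measure.pi μs).prod (Measure.pi μs)) :=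
    fun q => hL2.comp_measurePreserving (mpYq q)
  have hg : ∀ q : Fin n, MemLp
      (fun ω : (Fin n → ℝ) × (Fin n → ℝ) => f ω.1 - f (Function.update ω.1 q (ω.2 q))) 2 ((Measure.pi μs).prod (Measure.pi μs)) :=
    fun q => hFx.sub (hFxq q)
  have hΔ : ∀ q : Fin n,
      MemLp (fun ω => f (mixFun ((q : ℕ) + 1) ω) - f (mixFun (q : ℕ) ω)) 2 ((Measure.pi μs).prod (Measure.pi μs)) :=
    fun q => (hH _).sub (hH _)
  -- products of L² functions are integrable
  have hmul : ∀ u v : ((Fin n → ℝ) × (Fin n → ℝ)) → ℝ, MemLp u 2 ((Measure.pi μs).prod (Measure.pi μs)) → MemLp v 2 ((Measure.pi μs).prod (Measure.pi μs)) →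
      Integrable (fun ω => u ω * v ω) ((Measure.pi μs).prod (Measure.pi μs)) := by
    intro u v hu hv
    have h := hu.smul (φ := v) hv (p := 2) (q := 2) (r := 1)
    rw [memLp_one_iff_integrable] at h
    simpa [smul_eq_mul, mul_comm, Pi.mul_def] using h
  have hCS : ∀ u v : ((Fin n → ℝ) × (Fin n → ℝ)) → ℝ, MemLp u 2 ((Measure.pi μs).prod (Measure.pi μs)) → MemLp v 2 ((Measure.pi μs).prod (Measure.pi μs)) →
      ∫ ω, u ω * v ω ∂((Measure.pi μs).prod (Measure.pi μs)) ≤ ((∫ ω, (u ω)^2 ∂((Measure.pi μs).prod (Measure.pi μs))) + (∫ ω, (v ω)^2 ∂((Measure.pi μs).prod (Measure.pi μs))))/2 := by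
    intro u v hu hv
    have h1 : ∫ ω, u ω * v ω ∂((Measure.pi μs).prod (Measure.pi μs)) ≤ ∫ ω, ((u ω)^2 + (v ω)^2)/2 ∂((Measure.pi μs).prod (Measure.pi μs)) := by
      refine integral_mono (hmul _ _ hu hv)
        ((hu.integrable_sq.add hv.integrable_sq).div_const 2) ?_
      intro ω
      have := sq_nonneg (u ω - v ω)
      simp only
      nlinarith
    rwa [integral_div, integral_add hu.integrable_sq hv.integrable_sq] at h1
  -- variance identity
  have hvar : ProbabilityTheory.variance (fun ω : (Fin n → ℝ) × (Fin n → ℝ) => f ω.1) ((Measure.pi μs).prod (Measure.pi μs))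
      = (∫ ω, (f ω.1)^2 ∂((Measure.pi μs).prod (Measure.pi μs))) - (∫ ω, f ω.1 ∂((Measure.pi μs).prod (Measure.pi μs)))^2 := by
    rw [ProbabilityTheory.variance_eq_sub hFx]
    simp [Pi.pow_apply]
  -- basic integral computations
  have hEZ : ∫ ω, f ω.1 ∂((Measure.pi μs).prod (Measure.pi μs)) = ∫ x, f x ∂(Measure.pi μs) := by
    simpa using integral_prod_mul (μ := Measure.pi μs) (ν := Measure.pi μs) f (fun _ => (1:ℝ))
  have hFyFx : ∫ ω, (f ω.2)^2 ∂((Measure.pi μs).prod (Measure.pi μs)) = ∫ ω, (f ω.1)^2 ∂((Measure.pi μs).prod (Measure.pi μs)) := by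
    have hc := (Measure.measurePreserving_swap (μ := Measure.pi μs) (ν := Measure.pi μs)).integral_comp
      (MeasurableEquiv.prodComm (α := Fin n → ℝ) (β := Fin n → ℝ)).measurableEmbedding (fun ω => (f ω.1)^2)
    rw [← hc]
    rfl
  have hFxFy : ∫ ω, f ω.1 * f ω.2 ∂((Measure.pi μs).prod (Measure.pi μs)) = (∫ ω, f ω.1 ∂((Measure.pi μs).prod (Measure.pi μs)))^2 := by
    rw [integral_prod_mul f f, hEZ, sq]
  have hsq : ∫ ω, (f ω.1 - f ω.2)^2 ∂((Measure.pi μs).prod (Measure.pi μs))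
      = 2*(∫ ω, (f ω.1)^2 ∂((Measure.pi μs).prod (Measure.pi μs))) - 2*(∫ ω, f ω.1 ∂((Measure.pi μs).prod (Measure.pi μs)))^2 := by
    have hexp : (fun ω : (Fin n → ℝ) × (Fin n → ℝ) => (f ω.1 - f ω.2)^2)
        = fun ω => ((f ω.1)^2 + (f ω.2)^2) - 2*(f ω.1 * f ω.2) := funext fun ω => by ring
    have iadd : Integrable (fun ω : (Fin n → ℝ) × (Fin n → ℝ) => (f ω.1)^2 + (f ω.2)^2) ((Measure.pi μs).prod (Measure.pi μs)) :=
      hFx.integrable_sq.add hFy.integrable_sq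
    have imul2 : Integrable (fun ω : (Fin n → ℝ) × (Fin n → ℝ) => 2*(f ω.1 * f ω.2)) ((Measure.pi μs).prod (Measure.pi μs)) :=
      (hmul _ _ hFx hFy).const_mul 2
    rw [hexp, integral_sub iadd imul2,
      integral_add hFx.integrable_sq hFy.integrable_sq, integral_const_mul, hFyFx, hFxFy]
    ring
  -- telescoping
  have htel : ∀ ω : (Fin n → ℝ) × (Fin n → ℝ),
      f ω.1 - f ω.2 = ∑ q : Fin n, (f (mixFun ((q : ℕ) + 1) ω) - f (mixFun (q : ℕ) ω)) := by
    intro ω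
    have h1 : ∑ q : Fin n, (f (mixFun ((q : ℕ) + 1) ω) - f (mixFun (q : ℕ) ω))
        = ∑ k ∈ Finset.range n, (f (mixFun (k + 1) ω) - f (mixFun k ω)) :=
      Fin.sum_univ_eq_sum_range (fun k => f (mixFun (k + 1) ω) - f (mixFun k ω)) n
    rw [h1, Finset.sum_range_sub (f := fun k => f (mixFun k ω)), mix_n, mix_zero]
  have hsplit : ∫ ω, (f ω.1 - f ω.2)^2 ∂((Measure.pi μs).prod (Measure.pi μs))
      = ∑ q : Fin n, ∫ ω, (f ω.1 - f ω.2)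
          * (f (mixFun ((q : ℕ) + 1) ω) - f (mixFun (q : ℕ) ω)) ∂((Measure.pi μs).prod (Measure.pi μs)) := by
    have h1 : (fun ω : (Fin n → ℝ) × (Fin n → ℝ) => (f ω.1 - f ω.2)^2)
        = fun ω => ∑ q : Fin n, (f ω.1 - f ω.2)
            * (f (mixFun ((q : ℕ) + 1) ω) - f (mixFun (q : ℕ) ω)) := by
      funext ω
      rw [← Finset.mul_sum, ← htel ω, sq]
    rw [h1]
    exact integral_finset_sum _ fun q _ => hmul _ _ (hFx.sub hFy) ((hH _).sub (hH _))
  -- the per-coordinate bound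
  have hAq : ∀ q : Fin n,
      ∫ ω, (f ω.1 - f ω.2) * (f (mixFun ((q : ℕ) + 1) ω) - f (mixFun (q : ℕ) ω)) ∂((Measure.pi μs).prod (Measure.pi μs))
        ≤ ∫ ω, (f ω.1 - f (Function.update ω.1 q (ω.2 q)))^2 ∂((Measure.pi μs).prod (Measure.pi μs)) := by
    intro q
    have hswap := integral_comp_swap μs (· = q)
      (fun ω => (f ω.1 - f ω.2) * (f (mixFun ((q : ℕ) + 1) ω) - f (mixFun (q : ℕ) ω)))
    have h1 : ∫ ω, (f ω.1 - f ω.2) * (f (mixFun ((q : ℕ) + 1) ω) - f (mixFun (q : ℕ) ω)) ∂((Measure.pi μs).prod (Measure.pi μs))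
        = - ∫ ω, (f (Function.update ω.1 q (ω.2 q)) - f (Function.update ω.2 q (ω.1 q)))
            * (f (mixFun ((q : ℕ) + 1) ω) - f (mixFun (q : ℕ) ω)) ∂((Measure.pi μs).prod (Measure.pi μs)) := by
      rw [← hswap, ← integral_neg]
      refine integral_congr_ae (Filter.Eventually.of_forall fun ω => ?_)
      beta_reduce
      simp only [fst_swapEq, snd_swapEq, mix_swapEq1, mix_swapEq2]
      ring
    have iA : Integrable (fun ω : (Fin n → ℝ) × (Fin n → ℝ) =>
        (f ω.1 - f ω.2) * (f (mixFun ((q : ℕ) + 1) ω) - f (mixFun (q : ℕ) ω))) ((Measure.pi μs).prod (Measure.pi μs)) :=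
      hmul _ _ (hFx.sub hFy) (hΔ q)
    have iB : Integrable (fun ω : (Fin n → ℝ) × (Fin n → ℝ) =>
        (f (Function.update ω.1 q (ω.2 q)) - f (Function.update ω.2 q (ω.1 q)))
          * (f (mixFun ((q : ℕ) + 1) ω) - f (mixFun (q : ℕ) ω))) ((Measure.pi μs).prod (Measure.pi μs)) :=
      hmul _ _ ((hFxq q).sub (hFyq q)) (hΔ q)
    have i1 : Integrable (fun ω : (Fin n → ℝ) × (Fin n → ℝ) =>
        (f ω.1 - f (Function.update ω.1 q (ω.2 q)))
          * (f (mixFun ((q : ℕ) + 1) ω) - f (mixFun (q : ℕ) ω))) ((Measure.pi μs).prod (Measure.pi μs)) :=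
      hmul _ _ (hFx.sub (hFxq q)) (hΔ q)
    have i2 : Integrable (fun ω : (Fin n → ℝ) × (Fin n → ℝ) =>
        (f (Function.update ω.2 q (ω.1 q)) - f ω.2)
          * (f (mixFun ((q : ℕ) + 1) ω) - f (mixFun (q : ℕ) ω))) ((Measure.pi μs).prod (Measure.pi μs)) :=
      hmul _ _ ((hFyq q).sub hFy) (hΔ q)
    have h2 : (∫ ω, (f ω.1 - f ω.2) * (f (mixFun ((q : ℕ) + 1) ω) - f (mixFun (q : ℕ) ω)) ∂((Measure.pi μs).prod (Measure.pi μs)))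
        - (∫ ω, (f (Function.update ω.1 q (ω.2 q)) - f (Function.update ω.2 q (ω.1 q)))
            * (f (mixFun ((q : ℕ) + 1) ω) - f (mixFun (q : ℕ) ω)) ∂((Measure.pi μs).prod (Measure.pi μs)))
        = (∫ ω, (f ω.1 - f (Function.update ω.1 q (ω.2 q)))
            * (f (mixFun ((q : ℕ) + 1) ω) - f (mixFun (q : ℕ) ω)) ∂((Measure.pi μs).prod (Measure.pi μs)))
          + (∫ ω, (f (Function.update ω.2 q (ω.1 q)) - f ω.2)
            * (f (mixFun ((q : ℕ) + 1) ω) - f (mixFun (q : ℕ) ω)) ∂((Measure.pi μs).prod (Measure.pi μs))) := by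
      rw [← integral_sub iA iB, ← integral_add i1 i2]
      refine integral_congr_ae (Filter.Eventually.of_forall fun ω => ?_)
      beta_reduce
      ring
    have hΔsq : ∫ ω, (f (mixFun ((q : ℕ) + 1) ω) - f (mixFun (q : ℕ) ω))^2 ∂((Measure.pi μs).prod (Measure.pi μs))
        = ∫ ω, (f ω.1 - f (Function.update ω.1 q (ω.2 q)))^2 ∂((Measure.pi μs).prod (Measure.pi μs)) := by
      have hc := integral_comp_swap μs (fun i : Fin n => ¬((i : ℕ) < (q : ℕ)))
        (fun ω => (f ω.1 - f (Function.update ω.1 q (ω.2 q)))^2)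
      rw [← hc]
      refine integral_congr_ae (Filter.Eventually.of_forall fun ω => ?_)
      beta_reduce
      rw [← mix_eq_fst_swap, snd_swapLt, update_mix]
      ring
    have hYsq : ∫ ω, (f (Function.update ω.2 q (ω.1 q)) - f ω.2)^2 ∂((Measure.pi μs).prod (Measure.pi μs))
        = ∫ ω, (f ω.1 - f (Function.update ω.1 q (ω.2 q)))^2 ∂((Measure.pi μs).prod (Measure.pi μs)) := by
      have hc := (Measure.measurePreserving_swap (μ := Measure.pi μs)
          (ν := Measure.pi μs)).integral_comp
        (MeasurableEquiv.prodComm (α := Fin n → ℝ) (β := Fin n → ℝ)).measurableEmbedding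
        (fun ω => (f ω.1 - f (Function.update ω.1 q (ω.2 q)))^2)
      rw [← hc]
      refine integral_congr_ae (Filter.Eventually.of_forall fun ω => ?_)
      beta_reduce
      simp only [Prod.fst_swap, Prod.snd_swap]
      ring
    have hb1 : (∫ ω, (f ω.1 - f (Function.update ω.1 q (ω.2 q)))
            * (f (mixFun ((q : ℕ) + 1) ω) - f (mixFun (q : ℕ) ω)) ∂((Measure.pi μs).prod (Measure.pi μs)))
        ≤ ((∫ ω, (f ω.1 - f (Function.update ω.1 q (ω.2 q)))^2 ∂((Measure.pi μs).prod (Measure.pi μs)))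
            + (∫ ω, (f (mixFun ((q : ℕ) + 1) ω) - f (mixFun (q : ℕ) ω))^2 ∂((Measure.pi μs).prod (Measure.pi μs))))/2 :=
      hCS _ _ (hFx.sub (hFxq q)) (hΔ q)
    have hb2 : (∫ ω, (f (Function.update ω.2 q (ω.1 q)) - f ω.2)
            * (f (mixFun ((q : ℕ) + 1) ω) - f (mixFun (q : ℕ) ω)) ∂((Measure.pi μs).prod (Measure.pi μs)))
        ≤ ((∫ ω, (f (Function.update ω.2 q (ω.1 q)) - f ω.2)^2 ∂((Measure.pi μs).prod (Measure.pi μs)))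
            + (∫ ω, (f (mixFun ((q : ℕ) + 1) ω) - f (mixFun (q : ℕ) ω))^2 ∂((Measure.pi μs).prod (Measure.pi μs))))/2 :=
      hCS _ _ ((hFyq q).sub hFy) (hΔ q)
    linarith [h1, h2, hb1, hb2, hΔsq, hYsq]
  -- positive/negative part symmetry
  have hposneg : ∀ q : Fin n, ∫ ω, (f ω.1 - f (Function.update ω.1 q (ω.2 q)))^2 ∂((Measure.pi μs).prod (Measure.pi μs))
      = 2 * ∫ ω, (max 0 (f ω.1 - f (Function.update ω.1 q (ω.2 q)))) ^ 2 ∂((Measure.pi μs).prod (Measure.pi μs)) := by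
    intro q
    have hmax : MemLp
        (fun ω : (Fin n → ℝ) × (Fin n → ℝ) =>
          max 0 (f ω.1 - f (Function.update ω.1 q (ω.2 q)))) 2 ((Measure.pi μs).prod (Measure.pi μs)) :=
      memLp_max_zero (hg q)
    have hmaxneg : MemLp
        (fun ω : (Fin n → ℝ) × (Fin n → ℝ) =>
          max 0 (-(f ω.1 - f (Function.update ω.1 q (ω.2 q))))) 2 ((Measure.pi μs).prod (Measure.pi μs)) :=
      memLp_max_zero (hg q).neg
    have hsplit2 : ∫ ω, (f ω.1 - f (Function.update ω.1 q (ω.2 q)))^2 ∂((Measure.pi μs).prod (Measure.pi μs))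
        = (∫ ω, (max 0 (f ω.1 - f (Function.update ω.1 q (ω.2 q)))) ^ 2 ∂((Measure.pi μs).prod (Measure.pi μs)))
          + (∫ ω, (max 0 (-(f ω.1 - f (Function.update ω.1 q (ω.2 q))))) ^ 2 ∂((Measure.pi μs).prod (Measure.pi μs))) := by
      rw [← integral_add hmax.integrable_sq hmaxneg.integrable_sq]
      refine integral_congr_ae (Filter.Eventually.of_forall fun ω => ?_)
      beta_reduce
      rcases le_total 0 (f ω.1 - f (Function.update ω.1 q (ω.2 q))) with h | h
      · rw [max_eq_right h, max_eq_left (by linarith)]; ring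
      · rw [max_eq_left h, max_eq_right (by linarith)]; ring
    have hflip : ∫ ω, (max 0 (-(f ω.1 - f (Function.update ω.1 q (ω.2 q))))) ^ 2 ∂((Measure.pi μs).prod (Measure.pi μs))
        = ∫ ω, (max 0 (f ω.1 - f (Function.update ω.1 q (ω.2 q)))) ^ 2 ∂((Measure.pi μs).prod (Measure.pi μs)) := by
      have hc := integral_comp_swap μs (· = q)
        (fun ω => (max 0 (f ω.1 - f (Function.update ω.1 q (ω.2 q)))) ^ 2)
      rw [← hc]
      refine integral_congr_ae (Filter.Eventually.of_forall fun ω => ?_)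
      beta_reduce
      rw [update_swapEq, fst_swapEq, neg_sub]
    linarith [hsplit2, hflip]
  -- final assembly
  have hsum_le : (∑ q : Fin n, ∫ ω, (f ω.1 - f ω.2)
        * (f (mixFun ((q : ℕ) + 1) ω) - f (mixFun (q : ℕ) ω)) ∂((Measure.pi μs).prod (Measure.pi μs)))
      ≤ ∑ q : Fin n, 2 * ∫ ω, (max 0 (f ω.1 - f (Function.update ω.1 q (ω.2 q)))) ^ 2 ∂((Measure.pi μs).prod (Measure.pi μs)) :=
    Finset.sum_le_sum fun q _ => le_of_le_of_eq (hAq q) (hposneg q)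
  have hmulsum : (∑ q : Fin n, 2 * ∫ ω, (max 0 (f ω.1 - f (Function.update ω.1 q (ω.2 q)))) ^ 2 ∂((Measure.pi μs).prod (Measure.pi μs)))
      = 2 * ∑ q : Fin n, ∫ ω, (max 0 (f ω.1 - f (Function.update ω.1 q (ω.2 q)))) ^ 2 ∂((Measure.pi μs).prod (Measure.pi μs)) := by
    rw [Finset.mul_sum]
  rw [hvar]
  linarith [hsq, hsplit, hsum_le, hmulsum]
end
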